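/- arXiv:1803.00440 — 6 statements merged into one kernel-verified Lean document; each statement's English description precedes it below -/
import Mathlib

section
/- Let g be a rational function on ℂ with no poles in the open unit disk, having a pole at t = 1 whose order r ≥ 1 is greater than or equal to the order of every other pole of g, and write g(t) = Σ_{n≥0} g_n tⁿ for |t| < 1. Let p and q be polynomials with complex coefficients with q(1) ≠ 0, and let s_n and d_n denote the Taylor coefficients at 0 of s(t) = p(t)g(t) and d(t) = q(t)g(t). Then both limits lim_{t→1⁻} s(t)/d(t) (along real t < 1) and lim_{N→∞} (Σ_{n≤N} s_n)/(Σ_{n≤N} d_n) exist and are equal to p(1)/q(1). -/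
open Filter Topology Polynomial

-- nat lemmas
lemma choose_le_pow_aux (n k : ℕ) : (n + k).choose k ≤ (n + 1) ^ k := by
  induction k with
  | zero => simp
  | succ k ih =>
    have h1 : (n + k + 1) * (n + k).choose k = (n + k + 1).choose (k + 1) * (k + 1) :=
      Nat.add_one_mul_choose_eq (n + k) k
    have h2 : (n + (k+1)).choose (k+1) * (k+1) ≤ ((n+1)^(k+1)) * (k+1) := by
      calc (n + (k+1)).choose (k+1) * (k+1) = (n + k + 1) * (n + k).choose k := by
              rw [show n + (k+1) = n + k + 1 from rfl, ← h1]
        _ ≤ (n + k + 1) * (n + 1)^k := Nat.mul_le_mul_left _ ih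
        _ ≤ ((n+1) * (k+1)) * (n+1)^k := by
              apply Nat.mul_le_mul_right; nlinarith
        _ = ((n+1)^(k+1)) * (k+1) := by ring
    exact Nat.le_of_mul_le_mul_right h2 (Nat.succ_pos k)

lemma pow_le_factorial_mul_choose (n k : ℕ) : (n + 1) ^ k ≤ k.factorial * (n + k).choose k := by
  induction k with
  | zero => simp
  | succ k ih =>
    have h1 : (n + k + 1) * (n + k).choose k = (n + k + 1).choose (k + 1) * (k + 1) :=
      Nat.add_one_mul_choose_eq (n + k) k
    calc (n+1)^(k+1) = (n+1) * (n+1)^k := by ring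
      _ ≤ (n+1) * (k.factorial * (n+k).choose k) := Nat.mul_le_mul_left _ ih
      _ ≤ (n+k+1) * (k.factorial * (n+k).choose k) := by
            apply Nat.mul_le_mul_right; omega
      _ = k.factorial * ((n + k + 1) * (n+k).choose k) := by ring
      _ = k.factorial * ((n + k + 1).choose (k+1) * (k+1)) := by rw [h1]
      _ = (k+1).factorial * (n + (k+1)).choose (k+1) := by
            rw [Nat.factorial_succ, show n + (k+1) = n + k + 1 from rfl]; ring

set_option maxHeartbeats 1000000 in
lemma summable_norm_of_hasSum {a : ℕ → ℂ} {f : ℂ → ℂ}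
    (h : ∀ z : ℂ, ‖z‖ < 1 → HasSum (fun n => a n * z ^ n) (f z)) {z : ℂ} (hz : ‖z‖ < 1) :
    Summable fun n => ‖a n * z ^ n‖ := by
  set ρ : ℝ := (1 + ‖z‖) / 2 with hρdef
  have h0 : 0 ≤ ‖z‖ := norm_nonneg z
  have hρ1 : ρ < 1 := by rw [hρdef]; linarith
  have hρ0 : 0 < ρ := by rw [hρdef]; linarith
  have hzρ : ‖z‖ < ρ := by rw [hρdef]; linarith
  have hρn : ‖((ρ : ℝ) : ℂ)‖ = ρ := by
    rw [Complex.norm_real, Real.norm_eq_abs, abs_of_pos hρ0]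
  have h1 : Tendsto (fun n => ‖a n * ((ρ : ℝ) : ℂ) ^ n‖) atTop (𝓝 0) := by
    have := ((h _ (by rwa [hρn])).summable.tendsto_atTop_zero).norm
    rwa [norm_zero] at this
  obtain ⟨K, hK⟩ := h1.bddAbove_range
  have hKmem : ∀ n, ‖a n * ((ρ : ℝ) : ℂ) ^ n‖ ≤ K := fun n => hK ⟨n, rfl⟩
  refine Summable.of_nonneg_of_le (fun n => norm_nonneg _)
    (f := fun n => K * (‖z‖ / ρ) ^ n) ?_
    ((summable_geometric_of_lt_one (by positivity) (by rwa [div_lt_one hρ0])).mul_left K)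
  intro n
  have : ‖a n * z ^ n‖ = ‖a n * ((ρ : ℝ) : ℂ) ^ n‖ * (‖z‖ / ρ) ^ n := by
    rw [norm_mul, norm_mul, norm_pow, norm_pow, hρn, mul_assoc, ← mul_pow,
      mul_comm ρ (‖z‖/ρ), div_mul_cancel₀ _ hρ0.ne']
  rw [this]
  have hn : (0:ℝ) ≤ (‖z‖ / ρ) ^ n := by positivity
  exact mul_le_mul_of_nonneg_right (hKmem n) hn

lemma hasFPowerSeries_of_hasSum {a : ℕ → ℂ} {f : ℂ → ℂ}
    (h : ∀ z : ℂ, ‖z‖ < 1 → HasSum (fun n => a n * z ^ n) (f z)) :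
    HasFPowerSeriesOnBall f (FormalMultilinearSeries.ofScalars ℂ a) 0 1 := by
  refine ⟨?_, one_pos, ?_⟩
  · apply ENNReal.le_of_forall_nnreal_lt
    intro ρ hρ
    apply FormalMultilinearSeries.le_radius_of_summable
    have hρ1 : (ρ : ℝ) < 1 := by exact_mod_cast hρ
    have hn : ‖((ρ : ℝ) : ℂ)‖ < 1 := by
      rw [Complex.norm_real, Real.norm_eq_abs, NNReal.abs_eq]; exact hρ1
    have := summable_norm_of_hasSum h hn
    apply this.congr
    intro n
    rw [norm_mul, norm_pow, Complex.norm_real, Real.norm_eq_abs, NNReal.abs_eq,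
      FormalMultilinearSeries.ofScalars_norm]
  · intro y hy
    have hy' : ‖y‖ < 1 := by
      simpa [edist_zero_right, ← ENNReal.coe_one, ENNReal.coe_lt_coe,
        ← NNReal.coe_lt_coe, coe_nnnorm] using hy
    have := h y hy'
    simp only [FormalMultilinearSeries.ofScalars_apply_eq, smul_eq_mul, zero_add]
    exact this

lemma coeff_eq {a b : ℕ → ℂ} {f : ℂ → ℂ}
    (ha : ∀ z : ℂ, ‖z‖ < 1 → HasSum (fun n => a n * z ^ n) (f z))
    (hb : ∀ z : ℂ, ‖z‖ < 1 → HasSum (fun n => b n * z ^ n) (f z)) : a = b :=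
  FormalMultilinearSeries.ofScalars_series_injective ℂ ℂ
    ((hasFPowerSeries_of_hasSum ha).hasFPowerSeriesAt.eq_formalMultilinearSeries
      (hasFPowerSeries_of_hasSum hb).hasFPowerSeriesAt)

lemma coeff_bound (M : ℕ) (k : ℕ) : ∀ D C : Polynomial ℂ, D.natDegree ≤ k → D ≠ 0 →
    (∀ z : ℂ, D.eval z = 0 → 1 ≤ ‖z‖) → (∀ z : ℂ, D.rootMultiplicity z ≤ M + 1) →
    ∃ (a : ℕ → ℂ) (K : ℝ),
      (∀ z : ℂ, ‖z‖ < 1 → HasSum (fun n => a n * z ^ n) (C.eval z / D.eval z)) ∧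
      ∀ n : ℕ, ‖a n‖ ≤ K * ((n : ℝ) + 1) ^ M := by
  induction k using Nat.strong_induction_on with
  | _ k IH =>
  intro D C hdeg hD0 hroots hmult
  by_cases hnoroot : ∀ z : ℂ, D.eval z ≠ 0
  · -- D is a nonzero constant
    have hdeg0 : D.natDegree = 0 := by
      by_contra hne
      obtain ⟨z, hz⟩ := Complex.exists_root (f := D) (natDegree_pos_iff_degree_pos.mp
        (Nat.pos_of_ne_zero hne))
      exact hnoroot z hz
    set c := D.coeff 0 with hc
    have hDC : D = Polynomial.C c := Polynomial.eq_C_of_natDegree_eq_zero hdeg0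
    have hc0 : c ≠ 0 := fun h => hD0 (by rw [hDC, h, map_zero])
    refine ⟨fun n => C.coeff n * c⁻¹, ∑ i ∈ Finset.range (C.natDegree + 1), ‖C.coeff i * c⁻¹‖,
      ?_, ?_⟩
    · intro z hz
      have hsupp : ∀ n ∉ Finset.range (C.natDegree + 1), C.coeff n * c⁻¹ * z ^ n = 0 := by
        intro n hn
        rw [Finset.mem_range, not_lt] at hn
        rw [C.coeff_eq_zero_of_natDegree_lt (by omega), zero_mul, zero_mul]
      have := hasSum_sum_of_ne_finset_zero (L := SummationFilter.unconditional ℕ) hsupp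
      convert this using 1
      rw [hDC, eval_C, div_eq_mul_inv, Polynomial.eval_eq_sum_range, Finset.sum_mul]
      exact Finset.sum_congr rfl fun i _ => by ring
    · intro n
      have h1 : (1:ℝ) ≤ ((n:ℝ) + 1) ^ M := one_le_pow₀ (by linarith [Nat.cast_nonneg (α := ℝ) n])
      set K := ∑ i ∈ Finset.range (C.natDegree + 1), ‖C.coeff i * c⁻¹‖ with hK
      have hK0 : 0 ≤ K := Finset.sum_nonneg fun i _ => norm_nonneg _
      have h2 : ‖C.coeff n * c⁻¹‖ ≤ K := by
        by_cases hn : n < C.natDegree + 1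
        · exact Finset.single_le_sum (f := fun i => ‖C.coeff i * c⁻¹‖) (fun i _ => norm_nonneg _) (Finset.mem_range.mpr hn)
        · rw [C.coeff_eq_zero_of_natDegree_lt (by omega), zero_mul, norm_zero]
          exact hK0
      calc ‖C.coeff n * c⁻¹‖ ≤ K := h2
        _ = K * 1 := by ring
        _ ≤ K * ((n:ℝ) + 1) ^ M := by nlinarith
  · push_neg at hnoroot
    obtain ⟨z₀, hz₀⟩ := hnoroot
    have hz₀n : 1 ≤ ‖z₀‖ := hroots z₀ hz₀
    have hz₀0 : z₀ ≠ 0 := by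
      intro h; rw [h, norm_zero] at hz₀n; linarith
    obtain ⟨E, hDE, hEdvd⟩ := D.exists_eq_pow_rootMultiplicity_mul_and_not_dvd hD0 z₀
    have hE1 : E.eval z₀ ≠ 0 := fun h => hEdvd (Polynomial.dvd_iff_isRoot.mpr h)
    set m := D.rootMultiplicity z₀ with hm
    have hmpos : 0 < m := (Polynomial.rootMultiplicity_pos hD0).mpr hz₀
    obtain ⟨m', hm'⟩ : ∃ m', m = m' + 1 := ⟨m - 1, by omega⟩
    have hm'M : m' ≤ M := by have := hmult z₀; omega
    have hE0 : E ≠ 0 := by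
      rintro rfl; rw [mul_zero] at hDE; exact hD0 hDE
    set D' : Polynomial ℂ := (X - Polynomial.C z₀) ^ m' * E with hD'def
    have hD'0 : D' ≠ 0 := mul_ne_zero (pow_ne_zero _ (X_sub_C_ne_zero z₀)) hE0
    have hDD' : D = (X - Polynomial.C z₀) * D' := by
      rw [hD'def, hDE, hm', pow_succ]; ring
    have hdegD : D.natDegree = D'.natDegree + 1 := by
      rw [hDD', Polynomial.natDegree_mul (X_sub_C_ne_zero z₀) hD'0, natDegree_X_sub_C]
      omega
    have hdegpos : 1 ≤ D.natDegree := by omega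
    have hroots' : ∀ z : ℂ, D'.eval z = 0 → 1 ≤ ‖z‖ := by
      intro z hzz; apply hroots; rw [hDD', eval_mul, hzz, mul_zero]
    have hmult' : ∀ z : ℂ, D'.rootMultiplicity z ≤ M + 1 := by
      intro z
      refine le_trans ?_ (hmult z)
      have hdvd : (X - Polynomial.C z) ^ (D'.rootMultiplicity z) ∣ D :=
        (D'.pow_rootMultiplicity_dvd z).trans ⟨X - Polynomial.C z₀, by rw [hDD']; ring⟩
      exact (Polynomial.le_rootMultiplicity_iff hD0).mpr hdvd
    set c := C.eval z₀ / E.eval z₀ with hcdef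
    have hnum : (C - Polynomial.C c * E).eval z₀ = 0 := by
      simp only [eval_sub, eval_mul, eval_C, hcdef]
      field_simp
      ring
    obtain ⟨C₂, hC₂⟩ : (X - Polynomial.C z₀) ∣ (C - Polynomial.C c * E) :=
      Polynomial.dvd_iff_isRoot.mpr hnum
    obtain ⟨a', K', ha', hK'⟩ := IH D'.natDegree (by omega) D' C₂ le_rfl hD'0 hroots' hmult'
    refine ⟨fun n => c * ((-z₀)⁻¹) ^ m * (z₀⁻¹) ^ n * ((n + m').choose m' : ℂ) + a' n,
      ‖c‖ + K', ?_, ?_⟩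
    · intro z hz
      have hzz₀ : ‖z / z₀‖ < 1 := by
        rw [norm_div]
        calc ‖z‖ / ‖z₀‖ ≤ ‖z‖ / 1 := by
              apply div_le_div_of_nonneg_left (norm_nonneg z) one_pos hz₀n
          _ = ‖z‖ := by rw [div_one]
          _ < 1 := hz
      have hgeo := hasSum_choose_mul_geometric_of_norm_lt_one m' hzz₀
      have hgeo2 := hgeo.mul_left (c * ((-z₀)⁻¹) ^ m)
      have hDz : D.eval z ≠ 0 := fun h => absurd (hroots z h) (not_le.mpr hz)
      have hDzf : D.eval z = (z - z₀) ^ m * E.eval z := by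
        rw [hDE]; simp [eval_pow]
      have hEz : E.eval z ≠ 0 := by
        intro h; rw [hDzf, h, mul_zero] at hDz; exact hDz rfl
      have hzsub : z - z₀ ≠ 0 := by
        intro h; rw [hDzf, h, zero_pow (by omega), zero_mul] at hDz; exact hDz rfl
      have hD'z : D'.eval z ≠ 0 := by
        rw [hD'def]
        simp only [eval_mul, eval_pow, eval_sub, eval_X, eval_C]
        exact mul_ne_zero (pow_ne_zero _ hzsub) hEz
      have h1z : (1 : ℂ) - z / z₀ ≠ 0 := by
        intro h
        apply hzsub
        have : z / z₀ = 1 := by linear_combination -h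
        field_simp at this
        rw [this]; ring
      have hfun : (fun n : ℕ => (c * ((-z₀)⁻¹) ^ m * (z₀⁻¹) ^ n * ((n + m').choose m' : ℂ)) * z ^ n)
          = fun n : ℕ => c * ((-z₀)⁻¹) ^ m * (((n + m').choose m' : ℂ) * (z / z₀) ^ n) := by
        funext n
        rw [div_pow, div_eq_mul_inv, inv_pow]
        ring
      have h3 : HasSum (fun n : ℕ => (c * ((-z₀)⁻¹) ^ m * (z₀⁻¹) ^ n * ((n + m').choose m' : ℂ)) * z ^ n)
          (c * ((-z₀)⁻¹) ^ m * (1 / (1 - z / z₀) ^ (m' + 1))) := by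
        rw [hfun]; exact hgeo2
      have h5 : (-z₀) * (1 - z / z₀) = z - z₀ := by
        field_simp
        ring
      have h5p : (z - z₀) ^ (m' + 1) = (-z₀) ^ (m' + 1) * (1 - z / z₀) ^ (m' + 1) := by
        rw [← mul_pow, h5]
      have hne1 : ((1:ℂ) - z / z₀) ^ (m' + 1) ≠ 0 := pow_ne_zero _ h1z
      have hne2 : (-z₀ : ℂ) ≠ 0 := neg_ne_zero.mpr hz₀0
      have hkey : c * ((-z₀)⁻¹) ^ m * (1 / (1 - z / z₀) ^ (m' + 1)) = c / (z - z₀) ^ m := by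
        rw [hm', eq_div_iff (pow_ne_zero _ hzsub), h5p]
        have haux : ∀ (cc X Y : ℂ), X ≠ 0 → Y ≠ 0 → cc * X⁻¹ * (1 / Y) * (X * Y) = cc := by
          intro cc X Y hX hY; field_simp
        rw [inv_pow]
        exact haux c _ _ (pow_ne_zero _ hne2) hne1
      have hCz : C.eval z = c * E.eval z + (z - z₀) * C₂.eval z := by
        have h6 := congrArg (eval z) hC₂
        simp only [eval_sub, eval_mul, eval_C, eval_X] at h6
        linear_combination h6
      have hD'f : D'.eval z = (z - z₀) ^ m' * E.eval z := by
        rw [hD'def]; simp [eval_pow]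
      have hval : c / (z - z₀) ^ m + C₂.eval z / D'.eval z = C.eval z / D.eval z := by
        rw [hDzf, hD'f, hCz, hm']
        field_simp
        ring
      have h6 := h3.add (ha' z hz)
      rw [hkey, hval] at h6
      have h7 : (fun n : ℕ => (c * ((-z₀)⁻¹) ^ m * (z₀⁻¹) ^ n * ((n + m').choose m' : ℂ) + a' n) * z ^ n)
          = fun n : ℕ => (c * ((-z₀)⁻¹) ^ m * (z₀⁻¹) ^ n * ((n + m').choose m' : ℂ)) * z ^ n
            + a' n * z ^ n := by
        funext n; ring
      rw [h7]
      exact h6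
    · intro n
      have hn1 : (1:ℝ) ≤ (n:ℝ) + 1 := by linarith [Nat.cast_nonneg (α := ℝ) n]
      have hinv : ‖(-z₀)⁻¹‖ ≤ 1 := by
        rw [norm_inv, norm_neg]; exact inv_le_one_of_one_le₀ hz₀n
      have hinv2 : ‖z₀⁻¹‖ ≤ 1 := by
        rw [norm_inv]; exact inv_le_one_of_one_le₀ hz₀n
      have hcho : (((n + m').choose m' : ℕ) : ℝ) ≤ ((n:ℝ) + 1) ^ M := by
        calc (((n + m').choose m' : ℕ) : ℝ) ≤ (((n + 1) ^ m' : ℕ) : ℝ) :=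
              Nat.cast_le.mpr (choose_le_pow_aux n m')
          _ = ((n:ℝ) + 1) ^ m' := by push_cast; ring
          _ ≤ ((n:ℝ) + 1) ^ M := pow_le_pow_right₀ hn1 hm'M
      have hterm : ‖c * ((-z₀)⁻¹) ^ m * (z₀⁻¹) ^ n * ((n + m').choose m' : ℂ)‖
          ≤ ‖c‖ * ((n:ℝ) + 1) ^ M := by
        rw [norm_mul, norm_mul, norm_mul, norm_pow, norm_pow, Complex.norm_natCast]
        calc ‖c‖ * ‖(-z₀)⁻¹‖ ^ m * ‖z₀⁻¹‖ ^ n * (((n + m').choose m' : ℕ) : ℝ)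
            ≤ ‖c‖ * 1 ^ m * 1 ^ n * (((n:ℝ) + 1) ^ M) := by
              gcongr <;> first
                | exact norm_nonneg _
                | exact hinv
                | exact hinv2
                | exact hcho
          _ = ‖c‖ * ((n:ℝ) + 1) ^ M := by ring
      calc ‖c * ((-z₀)⁻¹) ^ m * (z₀⁻¹) ^ n * ((n + m').choose m' : ℂ) + a' n‖
          ≤ ‖c * ((-z₀)⁻¹) ^ m * (z₀⁻¹) ^ n * ((n + m').choose m' : ℂ)‖ + ‖a' n‖ :=
            norm_add_le _ _
        _ ≤ ‖c‖ * ((n:ℝ) + 1) ^ M + K' * ((n:ℝ) + 1) ^ M := add_le_add hterm (hK' n)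
        _ = (‖c‖ + K') * ((n:ℝ) + 1) ^ M := by ring

/-- Key asymptotic lemma: partial sums of Taylor coefficients of `P·A/B`, normalized
by binomial coefficients, converge. -/
lemma key_lemma (B E : Polynomial ℂ) (r' : ℕ)
    (hBE : B = (X - Polynomial.C 1) ^ (r' + 1) * E) (hE1 : E.eval 1 ≠ 0)
    (hroots : ∀ z : ℂ, B.eval z = 0 → 1 ≤ ‖z‖)
    (hmult : ∀ z : ℂ, B.rootMultiplicity z ≤ r' + 1)
    (A P : Polynomial ℂ) (u : ℕ → ℂ)
    (hu : ∀ z : ℂ, ‖z‖ < 1 → HasSum (fun n => u n * z ^ n) (P.eval z * (A.eval z / B.eval z))) :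
    Tendsto (fun N : ℕ => (∑ n ∈ Finset.range (N + 1), u n) / ((N + (r' + 1)).choose (r' + 1) : ℂ))
      atTop (𝓝 (P.eval 1 * A.eval 1 * ((-1 : ℂ) ^ (r' + 1) * E.eval 1)⁻¹)) := by
  have hB0 : B ≠ 0 := by
    intro h
    have := hroots 0 (by rw [h, eval_zero])
    rw [norm_zero] at this; linarith
  set c : ℂ := P.eval 1 * A.eval 1 * ((-1 : ℂ) ^ (r' + 1) * E.eval 1)⁻¹ with hcdef
  -- generating function of partial sums
  set U : ℕ → ℂ := fun N => ∑ n ∈ Finset.range (N + 1), u n with hU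
  have hUgen : ∀ z : ℂ, ‖z‖ < 1 → HasSum (fun N => U N * z ^ N)
      (P.eval z * (A.eval z / B.eval z) * (1 - z)⁻¹) := by
    intro z hz
    have hf := summable_norm_of_hasSum hu hz
    have hg : Summable fun n : ℕ => ‖z ^ n‖ := by
      simpa [norm_pow] using summable_geometric_of_lt_one (norm_nonneg z) hz
    have hcp := hasSum_sum_range_mul_of_summable_norm hf hg
    have ht1 : ∑' n, u n * z ^ n = P.eval z * (A.eval z / B.eval z) := (hu z hz).tsum_eq
    have ht2 : ∑' n : ℕ, z ^ n = (1 - z)⁻¹ := tsum_geometric_of_norm_lt_one hz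
    rw [ht1, ht2] at hcp
    convert hcp using 2 with N
    case e'_3 => rfl
    rw [hU, Finset.sum_mul]
    apply Finset.sum_congr rfl
    intro k hk
    rw [Finset.mem_range] at hk
    rw [mul_assoc, ← pow_add]
    congr 2
    omega
  -- the remainder sequence
  set w : ℕ → ℂ := fun N => U N - c * ((N + (r' + 1)).choose (r' + 1) : ℂ) with hw
  -- numerator polynomial
  set N₁ : Polynomial ℂ := P * A - Polynomial.C ((-1 : ℂ) ^ (r' + 1) * c) * E with hN₁
  have hN₁1 : N₁.eval 1 = 0 := by
    rw [hN₁]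
    simp only [eval_sub, eval_mul, eval_C]
    rw [hcdef]
    field_simp
    ring
  obtain ⟨C₂, hC₂⟩ : (X - Polynomial.C 1) ∣ N₁ := Polynomial.dvd_iff_isRoot.mpr hN₁1
  -- remainder generating function
  have hwgen : ∀ z : ℂ, ‖z‖ < 1 → HasSum (fun N => w N * z ^ N)
      ((-C₂).eval z / B.eval z) := by
    intro z hz
    have hgeo := hasSum_choose_mul_geometric_of_norm_lt_one (r' + 1) hz
    have h1 := (hUgen z hz).sub (hgeo.mul_left c)
    have hterm : (fun N : ℕ => U N * z ^ N - c * (((N + (r' + 1)).choose (r' + 1) : ℂ) * z ^ N))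
        = fun N => w N * z ^ N := by
      funext N; rw [hw]; ring
    rw [hterm] at h1
    convert h1 using 1
    case e'_3 => rfl
    -- value equality
    have hz1 : (1 : ℂ) - z ≠ 0 := by
      intro h
      have : z = 1 := by linear_combination -h
      rw [this] at hz; simp at hz
    have hBz : B.eval z ≠ 0 := fun h => absurd (hroots z h) (not_le.mpr hz)
    have hBzf : B.eval z = (z - 1) ^ (r' + 1) * E.eval z := by
      rw [hBE]; simp [eval_pow]
    have hEz : E.eval z ≠ 0 := by
      intro h; rw [hBzf, h, mul_zero] at hBz; exact hBz rfl
    have hzs : z - 1 ≠ 0 := by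
      intro h; rw [hBzf, h, zero_pow (by omega), zero_mul] at hBz; exact hBz rfl
    have hC₂z : P.eval z * A.eval z - (-1 : ℂ) ^ (r' + 1) * c * E.eval z
        = (z - 1) * C₂.eval z := by
      have h6 := congrArg (eval z) hC₂
      simp only [hN₁, eval_sub, eval_mul, eval_C, eval_X] at h6
      linear_combination h6
    have hsign : ((1 : ℂ) - z) ^ (r' + 1) = (-1 : ℂ) ^ (r' + 1) * (z - 1) ^ (r' + 1) := by
      rw [← mul_pow]; congr 1; ring
    have e1 : (1 : ℂ) - z = -(z - 1) := by ring
    have e2 : ((1 : ℂ) - z)⁻¹ = -((z - 1)⁻¹) := by rw [e1, inv_neg]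
    have e3 : ((1 : ℂ) - z) ^ (r' + 1 + 1) = -((-1 : ℂ) ^ (r' + 1) * (z - 1) ^ (r' + 1 + 1)) := by
      calc ((1 : ℂ) - z) ^ (r' + 1 + 1) = ((1:ℂ) - z) ^ (r' + 1) * ((1:ℂ) - z) := by
            rw [pow_succ]
        _ = ((-1 : ℂ) ^ (r' + 1) * (z - 1) ^ (r' + 1)) * (-(z - 1)) := by rw [hsign, e1]
        _ = -((-1 : ℂ) ^ (r' + 1) * (z - 1) ^ (r' + 1 + 1)) := by rw [pow_succ]; ring
    have hsq : ((-1 : ℂ) ^ (r' + 1)) * ((-1 : ℂ) ^ (r' + 1)) = 1 := by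
      rw [← mul_pow]; norm_num
    rw [eval_neg, hBzf, e2, e3]
    field_simp
    have hden : -((z - 1) ^ (r' + 1) * eval z E * (z - 1) * ((-1:ℂ) ^ (r' + 1) * (z - 1) ^ (r' + 1 + 1))) ≠ 0 := by
      simp only [ne_eq, neg_eq_zero]
      apply_rules [mul_ne_zero, pow_ne_zero] <;> first | exact hzs | exact hEz | norm_num
    linear_combination ((-1:ℂ)^(r'+1) * (z-1)^(r'+1+1)) * hC₂z
      + (c * eval z E * (z-1)^(r'+1+1)) * hsq
  obtain ⟨a, K, ha, hKb⟩ := coeff_bound r' B.natDegree B (-C₂) le_rfl hB0 hroots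
    (fun z => hmult z)
  have hweq : w = a := coeff_eq hwgen ha
  have hwb : ∀ N : ℕ, ‖w N‖ ≤ K * ((N:ℝ) + 1) ^ r' := fun N => hweq ▸ hKb N
  have hK0 : 0 ≤ K := by
    have := hwb 0
    simp only [Nat.cast_zero, zero_add, one_pow, mul_one] at this
    exact le_trans (norm_nonneg _) this
  set f : ℝ := ((r' + 1).factorial : ℝ) with hf
  have hb1 : ∀ N : ℕ, ‖w N / ((N + (r' + 1)).choose (r' + 1) : ℂ)‖
      ≤ (K * f) / ((N:ℝ) + 1) := by
    intro N
    have hcb : (0:ℝ) < (((N + (r' + 1)).choose (r' + 1) : ℕ) : ℝ) := by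
      exact_mod_cast Nat.choose_pos (by omega)
    have hN1 : (0:ℝ) < (N:ℝ) + 1 := by positivity
    rw [norm_div, Complex.norm_natCast, div_le_div_iff₀ hcb hN1]
    have h2 : ((( N + 1) ^ (r' + 1) : ℕ) : ℝ)
        ≤ (((r' + 1).factorial * (N + (r' + 1)).choose (r' + 1) : ℕ) : ℝ) :=
      Nat.cast_le.mpr (pow_le_factorial_mul_choose N (r' + 1))
    push_cast at h2
    calc ‖w N‖ * ((N:ℝ) + 1) ≤ (K * ((N:ℝ) + 1) ^ r') * ((N:ℝ) + 1) :=
          mul_le_mul_of_nonneg_right (hwb N) (by positivity)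
      _ = K * ((N:ℝ) + 1) ^ (r' + 1) := by ring
      _ ≤ K * (f * (((N + (r' + 1)).choose (r' + 1) : ℕ) : ℝ)) := by
          apply mul_le_mul_of_nonneg_left _ hK0
          rw [hf]
          exact_mod_cast h2
      _ = K * f * (((N + (r' + 1)).choose (r' + 1) : ℕ) : ℝ) := by ring
  have hgt : Tendsto (fun N : ℕ => (K * f) / ((N:ℝ) + 1)) atTop (𝓝 0) := by
    have := tendsto_one_div_add_atTop_nhds_zero_nat.const_mul (K * f)
    simpa [mul_one_div, div_eq_mul_inv] using this
  have htend0 : Tendsto (fun N : ℕ => w N / ((N + (r' + 1)).choose (r' + 1) : ℂ))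
      atTop (𝓝 0) := squeeze_zero_norm hb1 hgt
  have hCbne : ∀ N : ℕ, (((N + (r' + 1)).choose (r' + 1) : ℕ) : ℂ) ≠ 0 := fun N =>
    Nat.cast_ne_zero.mpr (Nat.choose_pos (by omega)).ne'
  have heq2 : (fun N : ℕ => U N / ((N + (r' + 1)).choose (r' + 1) : ℂ))
      = fun N : ℕ => c + w N / ((N + (r' + 1)).choose (r' + 1) : ℂ) := by
    funext N
    rw [hw]
    field_simp [hCbne N]
    ring
  have hfinal := htend0.const_add c
  rw [add_zero] at hfinal
  rw [← heq2] at hfinal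
  exact hfinal

/-- Let `g = A/B` be a rational function (with `A, B` coprime) having no
poles in the open unit disk, with a pole at `1` whose order is `≥ 1` and is maximal among
the orders of all poles.  If `p, q` are polynomials with `q 1 ≠ 0` and `s n`, `d n` are the
Taylor coefficients at `0` of `p·g` and `q·g`, then both `lim_{t→1⁻} s(t)/d(t)` (along real
`t < 1`) and `lim_N (∑_{n ≤ N} s n)/(∑_{n ≤ N} d n)` exist and equal `p 1 / q 1`. -/
theorem statement0 (A B p q : Polynomial ℂ)
    (hcop : IsCoprime A B)
    (hpoles : ∀ z : ℂ, ‖z‖ < 1 → B.eval z ≠ 0)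
    (hr : 1 ≤ B.rootMultiplicity 1)
    (hmax : ∀ z : ℂ, z ≠ 1 → B.rootMultiplicity z ≤ B.rootMultiplicity 1)
    (hq1 : q.eval 1 ≠ 0)
    (s d : ℕ → ℂ)
    (hs : ∀ z : ℂ, ‖z‖ < 1 →
      HasSum (fun n : ℕ => s n * z ^ n) (p.eval z * (A.eval z / B.eval z)))
    (hd : ∀ z : ℂ, ‖z‖ < 1 →
      HasSum (fun n : ℕ => d n * z ^ n) (q.eval z * (A.eval z / B.eval z))) :
    Tendsto (fun t : ℝ =>
        (p.eval (t : ℂ) * (A.eval (t : ℂ) / B.eval (t : ℂ))) /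
          (q.eval (t : ℂ) * (A.eval (t : ℂ) / B.eval (t : ℂ))))
      (𝓝[<] (1 : ℝ)) (𝓝 (p.eval 1 / q.eval 1)) ∧
    Tendsto (fun N : ℕ =>
        (∑ n ∈ Finset.range (N + 1), s n) / (∑ n ∈ Finset.range (N + 1), d n))
      atTop (𝓝 (p.eval 1 / q.eval 1)) := by
  have hB0 : B ≠ 0 := fun h => hpoles 0 (by simp) (by rw [h, eval_zero])
  have hB1 : B.eval 1 = 0 := (Polynomial.rootMultiplicity_pos hB0).mp (by omega)
  have hA1 : A.eval 1 ≠ 0 := by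
    intro hA
    obtain ⟨u, v, huv⟩ := hcop
    have := congrArg (eval 1) huv
    simp only [eval_add, eval_mul, eval_one, hA, hB1, mul_zero] at this
    simp at this
  have hroots : ∀ z : ℂ, B.eval z = 0 → 1 ≤ ‖z‖ := by
    intro z h
    by_contra hlt
    exact hpoles z (not_le.mp hlt) h
  constructor
  · -- limit as t → 1⁻
    have hAev : ∀ᶠ t : ℝ in 𝓝[<] (1:ℝ), A.eval ((t : ℝ) : ℂ) ≠ 0 := by
      have hcont : Tendsto (fun t : ℝ => A.eval ((t : ℝ) : ℂ)) (𝓝[<] (1:ℝ)) (𝓝 (A.eval 1)) := by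
        have h1 : Tendsto (fun t : ℝ => A.eval ((t : ℝ) : ℂ)) (𝓝 (1:ℝ)) (𝓝 (A.eval 1)) := by
          have := (A.continuous.comp Complex.continuous_ofReal).tendsto (1:ℝ)
          simpa [Function.comp_def] using this
        exact h1.mono_left nhdsWithin_le_nhds
      exact hcont.eventually_ne hA1
    have hIoo : Set.Ioo (0:ℝ) 1 ∈ 𝓝[<] (1:ℝ) :=
      Ioo_mem_nhdsLT_of_mem (by constructor <;> norm_num)
    have heq : ∀ᶠ t : ℝ in 𝓝[<] (1:ℝ),
        (p.eval (t : ℂ) * (A.eval (t : ℂ) / B.eval (t : ℂ))) /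
          (q.eval (t : ℂ) * (A.eval (t : ℂ) / B.eval (t : ℂ)))
        = p.eval (t : ℂ) / q.eval (t : ℂ) := by
      filter_upwards [hAev, hIoo] with t hAt ht
      have hnorm : ‖((t : ℝ) : ℂ)‖ < 1 := by
        rw [Complex.norm_real, Real.norm_eq_abs, abs_of_pos ht.1]
        exact ht.2
      have hBt : B.eval ((t:ℝ):ℂ) ≠ 0 := hpoles _ hnorm
      exact mul_div_mul_right _ _ (div_ne_zero hAt hBt)
    have hlim : Tendsto (fun t : ℝ => p.eval ((t:ℝ):ℂ) / q.eval ((t:ℝ):ℂ))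
        (𝓝[<] (1:ℝ)) (𝓝 (p.eval 1 / q.eval 1)) := by
      apply Tendsto.div
      · have := (p.continuous.comp Complex.continuous_ofReal).tendsto (1:ℝ)
        simp only [Function.comp, Complex.ofReal_one] at this
        exact this.mono_left nhdsWithin_le_nhds
      · have := (q.continuous.comp Complex.continuous_ofReal).tendsto (1:ℝ)
        simp only [Function.comp, Complex.ofReal_one] at this
        exact this.mono_left nhdsWithin_le_nhds
      · exact hq1
    exact Tendsto.congr' (heq.mono fun t ht => ht.symm) hlim
  · -- limit of ratios of partial sums
    obtain ⟨r', hr'⟩ : ∃ r', B.rootMultiplicity 1 = r' + 1 :=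
      ⟨B.rootMultiplicity 1 - 1, by omega⟩
    obtain ⟨E, hBE, hEdvd⟩ := B.exists_eq_pow_rootMultiplicity_mul_and_not_dvd hB0 1
    rw [hr'] at hBE
    have hE1 : E.eval 1 ≠ 0 := fun h => hEdvd (Polynomial.dvd_iff_isRoot.mpr h)
    have hmult : ∀ z : ℂ, B.rootMultiplicity z ≤ r' + 1 := by
      intro z
      by_cases hz : z = 1
      · rw [hz]; omega
      · have := hmax z hz; omega
    have hks := key_lemma B E r' hBE hE1 hroots hmult A p s hs
    have hkd := key_lemma B E r' hBE hE1 hroots hmult A q d hd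
    have hX : ((-1 : ℂ) ^ (r' + 1) * E.eval 1)⁻¹ ≠ 0 :=
      inv_ne_zero (mul_ne_zero (pow_ne_zero _ (by norm_num)) hE1)
    have hcq : q.eval 1 * A.eval 1 * ((-1 : ℂ) ^ (r' + 1) * E.eval 1)⁻¹ ≠ 0 :=
      mul_ne_zero (mul_ne_zero hq1 hA1) hX
    have hdiv := hks.div hkd hcq
    have hval : p.eval 1 * A.eval 1 * ((-1 : ℂ) ^ (r' + 1) * E.eval 1)⁻¹ /
        (q.eval 1 * A.eval 1 * ((-1 : ℂ) ^ (r' + 1) * E.eval 1)⁻¹) = p.eval 1 / q.eval 1 := by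
      rw [mul_assoc, mul_assoc]
      exact mul_div_mul_right _ _ (mul_ne_zero hA1 hX)
    rw [hval] at hdiv
    apply hdiv.congr
    intro N
    have hCbne : (((N + (r' + 1)).choose (r' + 1) : ℕ) : ℂ) ≠ 0 :=
      Nat.cast_ne_zero.mpr (Nat.choose_pos (by omega)).ne'
    simp only [Pi.div_apply]
    rw [div_div_div_eq, mul_comm (((N + (r' + 1)).choose (r' + 1) : ℕ) : ℂ),
      mul_div_mul_right _ _ hCbne]
end

section
/- Let W be a finite group, ρ : W → GL(λ) a finite-dimensional irreducible complex representation, S ⊆ W a finite subset closed under conjugation, c : S → ℂ a function constant on conjugacy classes of W contained in S, and for each s ∈ S let α_s be a nonzero real linear functional on ℝˡ. Let Ω = {x ∈ ℝˡ : α_s(x) ≠ 0 for all s ∈ S}, and let K : Ω → End_ℂ(λ) be differentiable and satisfy, for every y ∈ ℝˡ and every x ∈ Ω, the equation ∂_y K(x) + Σ_{s∈S} c_s (α_s(y)/α_s(x)) (ρ(s)∘K(x) + K(x)∘ρ(s)) = 0, where ∂_y denotes the directional derivative in direction y. Then K is homogeneous of degree −2a, where a = tr(Σ_{s∈S} c_s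 ρ(s))/dim λ; that is, K(t x) = t^{−2a} K(x) for all real t > 0 and all x ∈ Ω, where t^{−2a} = exp(−2a·log t). -/
set_option maxHeartbeats 1000000
set_option synthInstance.maxHeartbeats 400000


/-- Homogeneity of solutions of the two-sided KZ-type system.  Here `W` is a
finite group, `ρ : W →* End(ℂᵐ)` an irreducible representation (each `ρ w` is invertible as
`W` is a group), `S` a conjugation-closed finite subset with `c` constant on conjugacy
classes, and `α_s` nonzero real linear functionals on `ℝˡ`.  If `K`, defined on the
complement `Ω` of the hyperplanes `ker α_s`, is differentiable and satisfies
`∂_y K + ∑_s c_s (α_s(y)/α_s(x))(ρ(s)∘K + K∘ρ(s)) = 0`, then `K` is homogeneous of degree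
`−2a`, `a = tr(∑_s c_s ρ(s))/m`, that is `K (t•x) = exp(−2a log t) • K x` for `t > 0`. -/
theorem statement3 {W : Type*} [Group W] [Fintype W] (l m : ℕ) (hm : 0 < m)
    (ρ : W →* ((Fin m → ℂ) →L[ℂ] (Fin m → ℂ)))
    (hirr : ∀ U : Submodule ℂ (Fin m → ℂ),
      (∀ w : W, ∀ v ∈ U, ρ w v ∈ U) → U = ⊥ ∨ U = ⊤)
    (S : Finset W)
    (hSconj : ∀ w s : W, s ∈ S → w * s * w⁻¹ ∈ S)
    (c : W → ℂ)
    (hc : ∀ w s : W, s ∈ S → c (w * s * w⁻¹) = c s)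
    (α : W → ((Fin l → ℝ) →ₗ[ℝ] ℝ))
    (hα : ∀ s ∈ S, α s ≠ 0)
    (K : (Fin l → ℝ) → ((Fin m → ℂ) →L[ℂ] (Fin m → ℂ)))
    (hdiff : ∀ x : Fin l → ℝ, (∀ s ∈ S, α s x ≠ 0) → DifferentiableAt ℝ K x)
    (heq : ∀ x : Fin l → ℝ, (∀ s ∈ S, α s x ≠ 0) → ∀ y : Fin l → ℝ,
      fderiv ℝ K x y
        + ∑ s ∈ S, (c s * ((α s y / α s x : ℝ) : ℂ)) • (ρ s * K x + K x * ρ s) = 0) :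
    ∀ t : ℝ, 0 < t → ∀ x : Fin l → ℝ, (∀ s ∈ S, α s x ≠ 0) →
      K (t • x) =
        Complex.exp (-2 *
            ((LinearMap.trace ℂ (Fin m → ℂ)
              (∑ s ∈ S, c s • ((ρ s : (Fin m → ℂ) →L[ℂ] (Fin m → ℂ)) :
                (Fin m → ℂ) →ₗ[ℂ] (Fin m → ℂ)))) / (m : ℂ)) *
          (Real.log t : ℂ)) • K x := by
  haveI : Nonempty (Fin m) := ⟨⟨0, hm⟩⟩
  haveI : Nontrivial (Fin m → ℂ) := inferInstance
  -- The operator A = ∑ c_s ρ(s)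
  set Acl : (Fin m → ℂ) →L[ℂ] (Fin m → ℂ) :=
    ∑ s ∈ S, c s • (ρ s : (Fin m → ℂ) →L[ℂ] (Fin m → ℂ)) with hAcl
  set A : Module.End ℂ (Fin m → ℂ) :=
    ∑ s ∈ S, c s • ((ρ s : (Fin m → ℂ) →L[ℂ] (Fin m → ℂ)) : (Fin m → ℂ) →ₗ[ℂ] (Fin m → ℂ))
    with hA
  have hAapp : ∀ v, A v = Acl v := by
    intro v
    simp [hA, hAcl, LinearMap.sum_apply, ContinuousLinearMap.sum_apply]
  -- A commutes with the representation
  have hsmul_mul : ∀ (a : ℂ) (f g : (Fin m → ℂ) →L[ℂ] (Fin m → ℂ)),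
      (a • f) * g = a • (f * g) := fun a f g => by
    ext v; simp [ContinuousLinearMap.mul_apply]
  have hmul_smul : ∀ (a : ℂ) (f g : (Fin m → ℂ) →L[ℂ] (Fin m → ℂ)),
      f * (a • g) = a • (f * g) := fun a f g => by
    ext v; simp [ContinuousLinearMap.mul_apply]
  have hcomm : ∀ w : W, ρ w * Acl = Acl * ρ w := by
    intro w
    rw [hAcl, Finset.mul_sum, Finset.sum_mul]
    have hL : ∀ s ∈ S, ρ w * (c s • ρ s) = c s • ρ (w * s) := fun s _ => by
      rw [hmul_smul, ← map_mul]
    have hR : ∀ s ∈ S, (c s • ρ s) * ρ w = c s • ρ (s * w) := fun s _ => by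
      rw [hsmul_mul, ← map_mul]
    rw [Finset.sum_congr rfl hL, Finset.sum_congr rfl hR]
    refine Finset.sum_nbij' (fun s => w * s * w⁻¹) (fun s => w⁻¹ * s * w) ?_ ?_ ?_ ?_ ?_
    · intro s hs; exact hSconj w s hs
    · intro s hs; simpa using hSconj w⁻¹ s hs
    · intro s hs; group
    · intro s hs; group
    · intro s hs
      rw [hc w s hs]
      congr 1
      group
  -- Schur: A acts as a scalar μ
  obtain ⟨μ, hμ⟩ := Module.End.exists_eigenvalue A
  have hinv : ∀ w : W, ∀ v ∈ Module.End.eigenspace A μ, ρ w v ∈ Module.End.eigenspace A μ := by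
    intro w v hv
    rw [Module.End.mem_eigenspace_iff] at hv ⊢
    have h2 : Acl (ρ w v) = ρ w (Acl v) := by
      have := congrArg (fun T : (Fin m → ℂ) →L[ℂ] (Fin m → ℂ) => T v) (hcomm w)
      simpa using this.symm
    rw [hAapp] at hv ⊢
    rw [h2, hv, map_smul]
  have hU : Module.End.eigenspace A μ = ⊤ :=
    (hirr _ hinv).resolve_left hμ
  have hscal : ∀ v, Acl v = μ • v := by
    intro v
    have hv : v ∈ Module.End.eigenspace A μ := hU ▸ Submodule.mem_top
    rw [Module.End.mem_eigenspace_iff] at hv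
    rw [← hAapp]; exact hv
  -- trace value
  have htr : LinearMap.trace ℂ (Fin m → ℂ) A / (m : ℂ) = μ := by
    have hAeq : A = μ • LinearMap.id := LinearMap.ext fun v => by
      rw [hAapp, hscal v]; simp
    rw [hAeq, map_smul, LinearMap.trace_id, Module.finrank_fintype_fun_eq_card,
      Fintype.card_fin, smul_eq_mul]
    have hm0 : (m : ℂ) ≠ 0 := Nat.cast_ne_zero.mpr hm.ne'
    field_simp
  -- Acl composed with any operator
  have hAclK₁ : ∀ T : (Fin m → ℂ) →L[ℂ] (Fin m → ℂ), Acl * T = μ • T :=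
    fun T => ContinuousLinearMap.ext fun v => by
      rw [ContinuousLinearMap.mul_apply, hscal]; rfl
  have hAclK₂ : ∀ T : (Fin m → ℂ) →L[ℂ] (Fin m → ℂ), T * Acl = μ • T :=
    fun T => ContinuousLinearMap.ext fun v => by
      rw [ContinuousLinearMap.mul_apply, hscal, map_smul]; rfl
  intro t ht x hx
  rw [htr]
  -- membership of the ray in Ω
  have hray : ∀ u : ℝ, 0 < u → ∀ s ∈ S, α s (u • x) ≠ 0 := by
    intro u hu s hs
    rw [map_smul, smul_eq_mul]
    exact mul_ne_zero hu.ne' (hx s hs)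
  -- derivative formula along the ray
  have hKder : ∀ u : ℝ, 0 < u →
      HasDerivAt (fun u : ℝ => K (u • x)) ((-(2 * μ) * (u : ℂ)⁻¹) • K (u • x)) u := by
    intro u hu
    have hmem := hray u hu
    have hfd : fderiv ℝ K (u • x) x = (-(2 * μ) * (u : ℂ)⁻¹) • K (u • x) := by
      have h0 := heq (u • x) hmem x
      have hterm : ∀ s ∈ S, (c s * ((α s x / α s (u • x) : ℝ) : ℂ)) •
          (ρ s * K (u • x) + K (u • x) * ρ s)
          = (u : ℂ)⁻¹ • (c s • (ρ s * K (u • x) + K (u • x) * ρ s)) := by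
        intro s hs
        have hq : (α s x / α s (u • x) : ℝ) = u⁻¹ := by
          rw [map_smul, smul_eq_mul]
          field_simp [hx s hs]
        rw [hq, smul_smul]
        congr 1
        push_cast
        ring
      have hsum : ∑ s ∈ S, (c s * ((α s x / α s (u • x) : ℝ) : ℂ)) •
          (ρ s * K (u • x) + K (u • x) * ρ s)
          = ((u : ℂ)⁻¹ * (2 * μ)) • K (u • x) := by
        rw [Finset.sum_congr rfl hterm, ← Finset.smul_sum]
        have hs2 : ∑ s ∈ S, c s • (ρ s * K (u • x) + K (u • x) * ρ s)
            = Acl * K (u • x) + K (u • x) * Acl := by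
          rw [hAcl, Finset.sum_mul, Finset.mul_sum, ← Finset.sum_add_distrib]
          refine Finset.sum_congr rfl fun s hs => ?_
          rw [smul_add, ← hsmul_mul, ← hmul_smul]
        rw [hs2, hAclK₁, hAclK₂]
        match_scalars
        ring
      rw [hsum] at h0
      linear_combination (norm := module) h0
    have hL : HasDerivAt (fun u : ℝ => u • x) x u := by
      simpa using (hasDerivAt_id u).smul_const x
    have hK' : HasFDerivAt K (fderiv ℝ K (u • x)) (u • x) :=
      (hdiff (u • x) hmem).hasFDerivAt
    have hcomp := hK'.comp_hasDerivAt u hL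
    rwa [hfd] at hcomp
  -- the auxiliary function with zero derivative
  set g : ℝ → ((Fin m → ℂ) →L[ℂ] (Fin m → ℂ)) :=
    fun u => Complex.exp (2 * μ * (Real.log u : ℂ)) • K (u • x) with hg
  have hgder : ∀ u : ℝ, 0 < u → HasDerivAt g 0 u := by
    intro u hu
    have hlog : HasDerivAt (fun u : ℝ => ((Real.log u : ℝ) : ℂ)) ((u : ℂ)⁻¹) u := by
      have := (Real.hasDerivAt_log hu.ne').ofReal_comp
      simpa using this
    have hexp : HasDerivAt (fun u : ℝ => Complex.exp (2 * μ * (Real.log u : ℂ)))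
        (Complex.exp (2 * μ * (Real.log u : ℂ)) * (2 * μ * (u : ℂ)⁻¹)) u :=
      (hlog.const_mul (2 * μ)).cexp
    have hsm := hexp.smul (hKder u hu)
    rw [smul_smul] at hsm
    refine hsm.congr_deriv ?_
    have h0 : Complex.exp (2 * μ * (Real.log u : ℂ)) * (-(2 * μ) * (u : ℂ)⁻¹)
        + Complex.exp (2 * μ * (Real.log u : ℂ)) * (2 * μ * (u : ℂ)⁻¹) = 0 := by ring
    exact (add_smul _ _ (K (u • x))).symm.trans (by rw [h0, zero_smul])
  -- g is constant on Ioi 0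
  have hconst : g t = g 1 := by
    have hdiffg : DifferentiableOn ℝ g (Set.Ioi (0:ℝ)) := fun u hu =>
      ((hgder u hu).differentiableAt).differentiableWithinAt
    have hzero : ∀ u ∈ Set.Ioi (0:ℝ), fderivWithin ℝ g (Set.Ioi (0:ℝ)) u = 0 := by
      intro u hu
      rw [fderivWithin_of_isOpen isOpen_Ioi hu]
      have hd : deriv g u = 0 := (hgder u hu).deriv
      ext y
      simp [← toSpanSingleton_deriv, hd]
    exact (convex_Ioi (0:ℝ)).is_const_of_fderivWithin_eq_zero hdiffg hzero
      (Set.mem_Ioi.mpr ht) (Set.mem_Ioi.mpr one_pos)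
  have hg1 : g 1 = K x := by
    simp [hg]
  rw [hg1] at hconst
  have hfin := congrArg
    (fun T : (Fin m → ℂ) →L[ℂ] (Fin m → ℂ) =>
      Complex.exp (-(2 * μ * (Real.log t : ℂ))) • T) hconst
  simp only [hg, smul_smul, ← Complex.exp_add, neg_add_cancel, Complex.exp_zero,
    one_smul] at hfin
  rw [hfin]
  congr 2
  ring
end

section
/- Let r ≥ 1 be an integer, let p and q be polynomials with integer coefficients with q(1) ≠ 0, and let (s_n)_{n≥0} and (d_n)_{n≥0} be sequences of integers such that |s_n| ≤ d_n for all n and such that Σ_{n≥0} s_n tⁿ = p(t)/(1−t)^r and Σ_{n≥0} d_n tⁿ = q(t)/(1−t)^r for all real t with |t| < 1. Then the rational number p(1)/q(1) lies in the interval [−1, 1], and both lim_{N→∞} (Σ_{n≤N} s_n)/(Σ_{n≤N} d_n) = p(1)/q(1) and lim_{n→∞} s_n/d_n = p(1)/q(1). -/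
open Filter Topology

/-- The explicit coefficient sequence of `p(t)/(1-t)^(j+1)`. -/
def E6 (j : ℕ) (p : Polynomial ℤ) (n : ℕ) : ℤ :=
  ∑ k ∈ Finset.range (n + 1), p.coeff k * ((n - k + j).choose j : ℤ)

/-- Uniqueness of power-series coefficients: if `∑ aₙ tⁿ = 0` on `(-1,1)` then all `aₙ = 0`. -/
lemma aux_zero6 (a : ℕ → ℝ)
    (h : ∀ t : ℝ, |t| < 1 → HasSum (fun n : ℕ => a n * t ^ n) 0) :
    ∀ n, a n = 0 := by
  have hsum : Summable (fun n : ℕ => |a n * (1/2 : ℝ) ^ n|) := by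
    rw [summable_abs_iff]
    exact (h (1/2) (by rw [abs_of_nonneg (by norm_num)]; norm_num)).summable
  set C : ℝ := ∑' n : ℕ, |a n * (1/2 : ℝ) ^ n| with hC
  have hC0 : 0 ≤ C := tsum_nonneg fun n => abs_nonneg _
  have hCn : ∀ n, |a n| ≤ C * 2 ^ n := by
    intro n
    have h1 : |a n * (1/2 : ℝ) ^ n| ≤ C := Summable.le_tsum hsum n fun m _ => abs_nonneg _
    have h2 : |a n * (1/2 : ℝ) ^ n| = |a n| * (1/2 : ℝ) ^ n := by
      rw [abs_mul, abs_pow, abs_of_pos (by norm_num : (0:ℝ) < 1/2)]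
    have h3 : |a n| = |a n| * (1/2 : ℝ) ^ n * 2 ^ n := by
      rw [mul_assoc, ← mul_pow]; norm_num
    rw [h3]
    exact mul_le_mul_of_nonneg_right (h2 ▸ h1) (by positivity)
  intro m
  induction m using Nat.strong_induction_on with
  | _ m ih =>
    have key : ∀ t : ℝ, 0 < t → t ≤ 1/4 → |a m| ≤ C * 2 ^ (m + 2) * t := by
      intro t ht0 ht4
      have ht1 : |t| < 1 := by rw [abs_of_pos ht0]; linarith
      have hsm : ∑ i ∈ Finset.range m, a i * t ^ i = 0 :=
        Finset.sum_eq_zero fun i hi => by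
          rw [ih i (Finset.mem_range.mp hi), zero_mul]
      have h1 : HasSum (fun n : ℕ => a (n + m) * t ^ (n + m)) 0 :=
        (hasSum_nat_add_iff (f := fun n : ℕ => a n * t ^ n) m).mpr
          (by rw [hsm, add_zero]; exact h t ht1)
      have ht0' : t ^ m ≠ 0 := pow_ne_zero _ (ne_of_gt ht0)
      have h1' : HasSum (fun n : ℕ => t ^ m * (a (n + m) * t ^ n)) (t ^ m * 0) := by
        rw [mul_zero]
        refine h1.congr_fun fun n => ?_
        rw [pow_add]; ring
      have h2 : HasSum (fun n : ℕ => a (n + m) * t ^ n) 0 :=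
        (hasSum_mul_left_iff ht0').mp h1'
      have h3 : HasSum (fun n : ℕ => a (n + 1 + m) * t ^ (n + 1)) (-(a m)) :=
        (hasSum_nat_add_iff (f := fun n : ℕ => a (n + m) * t ^ n) 1).mpr
          (by rw [Finset.sum_range_one]; simpa using h2)
      have hg : ∀ n : ℕ, |a (n + 1 + m) * t ^ (n + 1)| ≤ (C * 2 ^ (m + 1) * t) * (2 * t) ^ n := by
        intro n
        rw [abs_mul, abs_pow, abs_of_pos ht0]
        have h4 : |a (n + 1 + m)| * t ^ (n + 1) ≤ (C * 2 ^ (n + 1 + m)) * t ^ (n + 1) :=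
          mul_le_mul_of_nonneg_right (hCn _) (by positivity)
        refine h4.trans_eq ?_
        rw [mul_pow, pow_add, pow_add, pow_one, pow_succ]
        ring
      have hgs : Summable (fun n : ℕ => (C * 2 ^ (m + 1) * t) * (2 * t) ^ n) :=
        (summable_geometric_of_lt_one (by positivity) (by linarith)).mul_left _
      have hnorm : Summable (fun n : ℕ => |a (n + 1 + m) * t ^ (n + 1)|) :=
        Summable.of_nonneg_of_le (fun _ => abs_nonneg _) hg hgs
      have e1 : |a m| ≤ ∑' n : ℕ, (C * 2 ^ (m + 1) * t) * (2 * t) ^ n := by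
        calc |a m| = ‖-(a m)‖ := by rw [norm_neg, Real.norm_eq_abs]
        _ = ‖∑' n : ℕ, a (n + 1 + m) * t ^ (n + 1)‖ := by rw [h3.tsum_eq]
        _ ≤ ∑' n : ℕ, ‖a (n + 1 + m) * t ^ (n + 1)‖ := norm_tsum_le_tsum_norm (by simpa only [Real.norm_eq_abs] using hnorm)
        _ ≤ ∑' n : ℕ, (C * 2 ^ (m + 1) * t) * (2 * t) ^ n := by
            refine Summable.tsum_le_tsum (fun n => ?_) (by simpa only [Real.norm_eq_abs] using hnorm) hgs
            simpa only [Real.norm_eq_abs] using hg n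
      have e2 : ∑' n : ℕ, (C * 2 ^ (m + 1) * t) * (2 * t) ^ n
          = (C * 2 ^ (m + 1) * t) * (1 - 2 * t)⁻¹ := by
        rw [tsum_mul_left, tsum_geometric_of_lt_one (by positivity) (by linarith)]
      have e3 : (1 - 2 * t)⁻¹ ≤ 2 := by
        rw [show (2 : ℝ) = (1/2 : ℝ)⁻¹ by norm_num]
        exact inv_anti₀ (by norm_num) (by linarith)
      have e4 : (C * 2 ^ (m + 1) * t) * (1 - 2 * t)⁻¹ ≤ C * 2 ^ (m + 2) * t := by
        have h5 : (C * 2 ^ (m + 1) * t) * (1 - 2 * t)⁻¹ ≤ (C * 2 ^ (m + 1) * t) * 2 :=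
          mul_le_mul_of_nonneg_left e3 (by positivity)
        refine h5.trans_eq ?_
        rw [pow_succ]; ring
      linarith [e1, e2 ▸ e1]
    have hub : ∀ k : ℕ, |a m| ≤ C * 2 ^ (m + 2) * ((1/4 : ℝ) * (1/2) ^ k) := by
      intro k
      refine key _ (by positivity) ?_
      have : ((1:ℝ)/2) ^ k ≤ 1 := pow_le_one₀ (by norm_num) (by norm_num)
      nlinarith
    have hlim : Tendsto (fun k : ℕ => C * 2 ^ (m + 2) * ((1/4 : ℝ) * (1/2) ^ k)) atTop (𝓝 0) := by
      have h6 := tendsto_pow_atTop_nhds_zero_of_lt_one (show (0:ℝ) ≤ 1/2 by norm_num)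
        (show (1:ℝ)/2 < 1 by norm_num)
      have := (h6.const_mul ((1:ℝ)/4)).const_mul (C * 2 ^ (m + 2))
      simpa using this
    have : |a m| ≤ 0 := le_of_tendsto_of_tendsto tendsto_const_nhds hlim
      (Eventually.of_forall hub)
    have := abs_nonneg (a m)
    have : |a m| = 0 := le_antisymm ‹|a m| ≤ 0› ‹0 ≤ |a m|›
    exact abs_eq_zero.mp this

lemma E6_eq (j : ℕ) (p : Polynomial ℤ) (n : ℕ) :
    ∑ k ∈ Finset.range (p.natDegree + 1),
      (if k ≤ n then p.coeff k * ((n - k + j).choose j : ℤ) else 0) = E6 j p n := by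
  set M := max p.natDegree n with hM
  have h1 : ∑ k ∈ Finset.range (p.natDegree + 1),
      (if k ≤ n then p.coeff k * ((n - k + j).choose j : ℤ) else 0)
      = ∑ k ∈ Finset.range (M + 1),
      (if k ≤ n then p.coeff k * ((n - k + j).choose j : ℤ) else 0) := by
    refine Finset.sum_subset (Finset.range_subset_range.mpr (by omega)) ?_
    intro k hk1 hk2
    have hk3 : p.natDegree < k := by
      simp only [Finset.mem_range] at hk2; omega
    rw [Polynomial.coeff_eq_zero_of_natDegree_lt hk3]
    simp
  have h2 : ∑ k ∈ Finset.range (M + 1),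
      (if k ≤ n then p.coeff k * ((n - k + j).choose j : ℤ) else 0) = E6 j p n := by
    rw [E6, ← Finset.sum_subset (Finset.range_subset_range.mpr (show n + 1 ≤ M + 1 by omega))
      (fun k _ hk => if_neg (fun hkn => hk (Finset.mem_range.mpr (by omega))))]
    exact Finset.sum_congr rfl fun k hk =>
      if_pos (by simp only [Finset.mem_range] at hk; omega)
  rw [h1, h2]

lemma hasSum_E6 (j : ℕ) (p : Polynomial ℤ) {t : ℝ} (ht : |t| < 1) :
    HasSum (fun n : ℕ => (E6 j p n : ℝ) * t ^ n)
      ((Polynomial.aeval t p) / (1 - t) ^ (j + 1)) := by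
  have base : ∀ k : ℕ, HasSum
      (fun n : ℕ => (if k ≤ n then (p.coeff k : ℝ) * ((n - k + j).choose j : ℕ) else 0) * t ^ n)
      ((p.coeff k : ℝ) * t ^ k / (1 - t) ^ (j + 1)) := by
    intro k
    have h0 : HasSum (fun n : ℕ => (((n + j).choose j : ℕ) : ℝ) * t ^ n) (1 / (1 - t) ^ (j + 1)) :=
      hasSum_choose_mul_geometric_of_norm_lt_one j (by rwa [Real.norm_eq_abs])
    have h1 := h0.mul_left ((p.coeff k : ℝ) * t ^ k)
    have hinj : Function.Injective (fun n : ℕ => n + k) := fun a b hab => by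
      simpa using hab
    have hzero : ∀ m ∉ Set.range (fun n : ℕ => n + k),
        (if k ≤ m then (p.coeff k : ℝ) * ((m - k + j).choose j : ℕ) else 0) * t ^ m = 0 := by
      intro m hm
      rw [if_neg, zero_mul]
      intro hkm
      exact hm ⟨m - k, show m - k + k = m by omega⟩
    rw [← Function.Injective.hasSum_iff hinj hzero]
    have hfi : ∀ n : ℕ,
        (if k ≤ n + k then (p.coeff k : ℝ) * (((n + k - k + j).choose j : ℕ) : ℝ) else 0) * t ^ (n + k)
        = (p.coeff k : ℝ) * t ^ k * ((((n + j).choose j : ℕ) : ℝ) * t ^ n) := by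
      intro n
      rw [if_pos (Nat.le_add_left k n), Nat.add_sub_cancel, pow_add]
      ring
    have h2 : HasSum
        (fun n : ℕ => (p.coeff k : ℝ) * t ^ k * ((((n + j).choose j : ℕ) : ℝ) * t ^ n))
        ((p.coeff k : ℝ) * t ^ k / (1 - t) ^ (j + 1)) := by
      rw [div_eq_mul_one_div]
      exact h1
    refine HasSum.congr_fun h2 fun n => ?_
    simp only [Function.comp]
    exact hfi n
  have hs := hasSum_sum (s := Finset.range (p.natDegree + 1)) (f := fun k n =>
      (if k ≤ n then (p.coeff k : ℝ) * ((n - k + j).choose j : ℕ) else 0) * t ^ n)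
    (fun k _ => base k)
  have hval : ∑ k ∈ Finset.range (p.natDegree + 1), (p.coeff k : ℝ) * t ^ k / (1 - t) ^ (j + 1)
      = (Polynomial.aeval t p) / (1 - t) ^ (j + 1) := by
    rw [← Finset.sum_div, Polynomial.aeval_eq_sum_range]
    simp [zsmul_eq_mul]
  rw [hval] at hs
  refine hs.congr_fun fun n => ?_
  rw [← Finset.sum_mul]
  congr 1
  rw [← E6_eq j p n]
  push_cast [apply_ite (fun x : ℤ => (x : ℝ))]
  rfl

lemma sum_E6 (j : ℕ) (p : Polynomial ℤ) (N : ℕ) :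
    ∑ n ∈ Finset.range (N + 1), E6 j p n = E6 (j + 1) p N := by
  induction N with
  | zero => simp [E6]
  | succ N ih =>
    rw [Finset.sum_range_succ, ih]
    show E6 (j + 1) p N + E6 j p (N + 1) = E6 (j + 1) p (N + 1)
    rw [E6, E6, E6, Finset.sum_range_succ (n := N + 1), Finset.sum_range_succ (n := N + 1)]
    have hlast : (N + 1) - (N + 1) + j = j := by omega
    have hlast' : (N + 1) - (N + 1) + (j + 1) = j + 1 := by omega
    rw [hlast, hlast', Nat.choose_self, Nat.choose_self]
    have hmain : ∑ k ∈ Finset.range (N + 1), p.coeff k * ((N - k + (j + 1)).choose (j + 1) : ℤ)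
        + ∑ k ∈ Finset.range (N + 1), p.coeff k * ((N + 1 - k + j).choose j : ℤ)
        = ∑ k ∈ Finset.range (N + 1), p.coeff k * ((N + 1 - k + (j + 1)).choose (j + 1) : ℤ) := by
      rw [← Finset.sum_add_distrib]
      refine Finset.sum_congr rfl fun k hk => ?_
      have hkN : k ≤ N := by simp only [Finset.mem_range] at hk; omega
      have h1 : N + 1 - k + (j + 1) = (N - k + (j + 1)) + 1 := by omega
      have h2 : N + 1 - k + j = N - k + (j + 1) := by omega
      rw [h1, h2, Nat.choose_succ_succ]
      push_cast
      ring
    push_cast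
    linarith [hmain]

lemma tendsto_choose6 (j k : ℕ) :
    Tendsto (fun n : ℕ => (((n - k + j).choose j : ℕ) : ℝ) / (n : ℝ) ^ j) atTop
      (𝓝 (1 / (j.factorial : ℝ))) := by
  have hfac : (0:ℝ) < (j.factorial : ℝ) := by
    exact_mod_cast j.factorial_pos
  have key : ∀ n : ℕ, k ≤ n →
      (((n - k + j).choose j : ℕ) : ℝ) = (∏ i ∈ Finset.range j, ((n : ℝ) - k + j - i)) / (j.factorial : ℝ) := by
    intro n hn
    rw [eq_div_iff hfac.ne']
    have h := Nat.descFactorial_eq_factorial_mul_choose (n - k + j) j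
    have h2 := Nat.descFactorial_eq_prod_range (n - k + j) j
    have h3 : (j.factorial * ((n - k + j).choose j) : ℕ) = ∏ i ∈ Finset.range j, (n - k + j - i) := by
      rw [← h, h2]
    calc (((n - k + j).choose j : ℕ) : ℝ) * (j.factorial : ℝ)
        = ((j.factorial * ((n - k + j).choose j) : ℕ) : ℝ) := by push_cast; ring
      _ = ((∏ i ∈ Finset.range j, (n - k + j - i) : ℕ) : ℝ) := by rw [h3]
      _ = ∏ i ∈ Finset.range j, ((n : ℝ) - k + j - i) := by
          rw [Nat.cast_prod]
          refine Finset.prod_congr rfl fun i hi => ?_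
          have hij : i ≤ n - k + j := by
            simp only [Finset.mem_range] at hi; omega
          rw [Nat.cast_sub hij, Nat.cast_add, Nat.cast_sub hn]
  have h1 : ∀ᶠ n : ℕ in atTop, (∏ i ∈ Finset.range j, (((n : ℝ) - k + j - i) / n)) / (j.factorial : ℝ)
      = (((n - k + j).choose j : ℕ) : ℝ) / (n : ℝ) ^ j := by
    filter_upwards [eventually_ge_atTop k] with n hn
    rw [key n hn, Finset.prod_div_distrib, Finset.prod_const, Finset.card_range]
    ring
  have h2 : Tendsto (fun n : ℕ => (∏ i ∈ Finset.range j, (((n : ℝ) - k + j - i) / n)) / (j.factorial : ℝ))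
      atTop (𝓝 (1 / (j.factorial : ℝ))) := by
    have hprod : Tendsto (fun n : ℕ => ∏ i ∈ Finset.range j, (((n : ℝ) - k + j - i) / n)) atTop
        (𝓝 (∏ _i ∈ Finset.range j, (1:ℝ))) := by
      refine tendsto_finset_prod _ fun i _ => ?_
      have hlim : Tendsto (fun n : ℕ => 1 + ((j:ℝ) - k - i) / n) atTop (𝓝 1) := by
        have := tendsto_const_div_atTop_nhds_zero_nat ((j:ℝ) - k - i)
        simpa using tendsto_const_nhds.add this
      refine hlim.congr' ?_
      filter_upwards [eventually_ge_atTop 1] with n hn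
      have hn0 : (n:ℝ) ≠ 0 := Nat.cast_ne_zero.mpr (by omega)
      field_simp
      ring
    have := hprod.div_const (j.factorial : ℝ)
    simpa using this
  exact Tendsto.congr' h1 h2

lemma tendsto_E6 (j : ℕ) (p : Polynomial ℤ) :
    Tendsto (fun n : ℕ => (E6 j p n : ℝ) / (n : ℝ) ^ j) atTop
      (𝓝 (((p.eval 1 : ℤ) : ℝ) / (j.factorial : ℝ))) := by
  have h1 : ∀ᶠ n : ℕ in atTop, (∑ k ∈ Finset.range (p.natDegree + 1),
          (p.coeff k : ℝ) * ((((n - k + j).choose j : ℕ) : ℝ) / (n : ℝ) ^ j))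
      = (E6 j p n : ℝ) / (n : ℝ) ^ j := by
    filter_upwards [eventually_ge_atTop p.natDegree] with n hn
    have hE : E6 j p n = ∑ k ∈ Finset.range (p.natDegree + 1),
        p.coeff k * ((n - k + j).choose j : ℤ) := by
      rw [E6, ← Finset.sum_subset (Finset.range_subset_range.mpr (show p.natDegree + 1 ≤ n + 1 by omega))]
      intro k hk1 hk2
      rw [Polynomial.coeff_eq_zero_of_natDegree_lt
        (by simp only [Finset.mem_range] at hk2; omega), zero_mul]
    rw [hE]
    push_cast
    rw [Finset.sum_div]
    exact (Finset.sum_congr rfl fun k _ => by ring).symm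
  have h2 : Tendsto (fun n : ℕ => ∑ k ∈ Finset.range (p.natDegree + 1),
      (p.coeff k : ℝ) * ((((n - k + j).choose j : ℕ) : ℝ) / (n : ℝ) ^ j)) atTop
      (𝓝 (∑ k ∈ Finset.range (p.natDegree + 1), (p.coeff k : ℝ) * (1 / (j.factorial : ℝ)))) :=
    tendsto_finset_sum _ fun k _ => (tendsto_choose6 j k).const_mul _
  have hval : ∑ k ∈ Finset.range (p.natDegree + 1), (p.coeff k : ℝ) * (1 / (j.factorial : ℝ))
      = ((p.eval 1 : ℤ) : ℝ) / (j.factorial : ℝ) := by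
    rw [← Finset.sum_mul]
    have heval : (p.eval 1 : ℤ) = ∑ k ∈ Finset.range (p.natDegree + 1), p.coeff k := by
      conv_lhs => rw [Polynomial.eval_eq_sum_range]
      simp
    rw [heval]
    push_cast
    rw [mul_one_div]
  rw [hval] at h2
  exact Tendsto.congr' h1 h2

lemma ratio_tendsto6 {a b : ℕ → ℝ} {j : ℕ} {A B : ℝ} (hB : B ≠ 0)
    (ha : Tendsto (fun n : ℕ => a n / (n : ℝ) ^ j) atTop (𝓝 A))
    (hb : Tendsto (fun n : ℕ => b n / (n : ℝ) ^ j) atTop (𝓝 B)) :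
    Tendsto (fun n : ℕ => a n / b n) atTop (𝓝 (A / B)) := by
  have h := ha.div hb hB
  refine h.congr' ?_
  filter_upwards [eventually_ge_atTop 1] with n hn
  have hn0 : ((n : ℝ)) ^ j ≠ 0 := pow_ne_zero _ (Nat.cast_ne_zero.mpr (by omega))
  rcases eq_or_ne (b n) 0 with hb0 | hb0
  · simp [hb0]
  · simp only [Pi.div_apply]
    field_simp

/-- If `r ≥ 1`, `p, q ∈ ℤ[t]` with `q(1) ≠ 0`, and integer sequences
`s, d` satisfy `|sₙ| ≤ dₙ` and `∑ sₙ tⁿ = p(t)/(1−t)^r`, `∑ dₙ tⁿ = q(t)/(1−t)^r` for all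
real `|t| < 1`, then `p(1)/q(1) ∈ [−1,1]` and both the ratios of partial sums and the
ratios `sₙ/dₙ` converge to `p(1)/q(1)`. -/
theorem statement6 (r : ℕ) (hr : 1 ≤ r) (p q : Polynomial ℤ)
    (hq1 : q.eval 1 ≠ 0) (s d : ℕ → ℤ)
    (hsd : ∀ n, |s n| ≤ d n)
    (hs : ∀ t : ℝ, |t| < 1 →
      HasSum (fun n : ℕ => (s n : ℝ) * t ^ n) ((Polynomial.aeval t p) / (1 - t) ^ r))
    (hd : ∀ t : ℝ, |t| < 1 →
      HasSum (fun n : ℕ => (d n : ℝ) * t ^ n) ((Polynomial.aeval t q) / (1 - t) ^ r)) :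
    ((p.eval 1 : ℤ) : ℝ) / ((q.eval 1 : ℤ) : ℝ) ∈ Set.Icc (-1 : ℝ) 1 ∧
    Tendsto (fun N : ℕ =>
        (∑ n ∈ Finset.range (N + 1), (s n : ℝ)) / (∑ n ∈ Finset.range (N + 1), (d n : ℝ)))
      atTop (𝓝 (((p.eval 1 : ℤ) : ℝ) / ((q.eval 1 : ℤ) : ℝ))) ∧
    Tendsto (fun n : ℕ => (s n : ℝ) / (d n : ℝ))
      atTop (𝓝 (((p.eval 1 : ℤ) : ℝ) / ((q.eval 1 : ℤ) : ℝ))) := by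
  obtain ⟨j, rfl⟩ : ∃ j, r = j + 1 := ⟨r - 1, by omega⟩
  set p1 : ℝ := ((p.eval 1 : ℤ) : ℝ) with hp1
  set q1 : ℝ := ((q.eval 1 : ℤ) : ℝ) with hq1'
  have hq1ne : q1 ≠ 0 := Int.cast_ne_zero.mpr hq1
  have hfac : (0:ℝ) < (j.factorial : ℝ) := by exact_mod_cast j.factorial_pos
  have hfac' : (0:ℝ) < ((j+1).factorial : ℝ) := by exact_mod_cast (j+1).factorial_pos
  -- identification of coefficients
  have hsE : ∀ n, (s n : ℝ) = (E6 j p n : ℝ) := by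
    have h0 := aux_zero6 (fun n => (s n : ℝ) - (E6 j p n : ℝ)) ?_
    · intro n; have := h0 n; simpa [sub_eq_zero] using this
    · intro t ht
      have h1 := hs t ht
      have h2 := hasSum_E6 j p ht
      simpa [sub_mul] using h1.sub h2
  have hdE : ∀ n, (d n : ℝ) = (E6 j q n : ℝ) := by
    have h0 := aux_zero6 (fun n => (d n : ℝ) - (E6 j q n : ℝ)) ?_
    · intro n; have := h0 n; simpa [sub_eq_zero] using this
    · intro t ht
      have h1 := hd t ht
      have h2 := hasSum_E6 j q ht
      simpa [sub_mul] using h1.sub h2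
  have hsEZ : ∀ n, s n = E6 j p n := fun n => by exact_mod_cast hsE n
  have hdEZ : ∀ n, d n = E6 j q n := fun n => by exact_mod_cast hdE n
  -- limits of s n / n^j and d n / n^j
  have ts : Tendsto (fun n : ℕ => (s n : ℝ) / (n : ℝ) ^ j) atTop (𝓝 (p1 / (j.factorial : ℝ))) :=
    (tendsto_E6 j p).congr fun n => by rw [hsE n]
  have td : Tendsto (fun n : ℕ => (d n : ℝ) / (n : ℝ) ^ j) atTop (𝓝 (q1 / (j.factorial : ℝ))) :=
    (tendsto_E6 j q).congr fun n => by rw [hdE n]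
  have hsd' : ∀ n, |(s n : ℝ)| ≤ (d n : ℝ) := fun n => by exact_mod_cast hsd n
  -- q1 > 0 and |p1| ≤ q1
  have hq1nonneg : 0 ≤ q1 / (j.factorial : ℝ) := by
    refine ge_of_tendsto td ?_
    filter_upwards with n
    have : (0:ℝ) ≤ (d n : ℝ) := le_trans (abs_nonneg _) (hsd' n)
    positivity
  have hq1pos : 0 < q1 := by
    have h0 : 0 ≤ q1 := by
      have := mul_nonneg hq1nonneg hfac.le
      rwa [div_mul_cancel₀ _ hfac.ne'] at this
    exact lt_of_le_of_ne h0 (Ne.symm hq1ne)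
  have habs : |p1| ≤ q1 := by
    have h1 : |p1 / (j.factorial : ℝ)| ≤ q1 / (j.factorial : ℝ) := by
      refine le_of_tendsto_of_tendsto ts.abs td ?_
      filter_upwards [eventually_ge_atTop 1] with n hn
      have hn0 : (0:ℝ) < (n : ℝ) ^ j := by positivity
      rw [abs_div, abs_of_pos hn0]
      exact div_le_div_of_nonneg_right (hsd' n) hn0.le
    rw [abs_div, abs_of_pos hfac] at h1
    have := mul_le_mul_of_nonneg_right h1 hfac.le
    rwa [div_mul_cancel₀ _ hfac.ne', div_mul_cancel₀ _ hfac.ne'] at this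
  -- part 1
  have part1 : p1 / q1 ∈ Set.Icc (-1 : ℝ) 1 := by
    rw [Set.mem_Icc, ← abs_le, abs_div, abs_of_pos hq1pos]
    rw [div_le_one hq1pos]
    exact habs
  -- part 3
  have hBne : q1 / (j.factorial : ℝ) ≠ 0 := div_ne_zero hq1ne hfac.ne'
  have hval3 : (p1 / (j.factorial : ℝ)) / (q1 / (j.factorial : ℝ)) = p1 / q1 := by
    field_simp
  have part3 : Tendsto (fun n : ℕ => (s n : ℝ) / (d n : ℝ)) atTop (𝓝 (p1 / q1)) := by
    have := ratio_tendsto6 hBne ts td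
    rwa [hval3] at this
  -- part 2
  have hssum : ∀ N : ℕ, ∑ n ∈ Finset.range (N + 1), (s n : ℝ) = (E6 (j + 1) p N : ℝ) := by
    intro N
    rw [← sum_E6 j p N]
    push_cast
    exact Finset.sum_congr rfl fun n _ => by rw [hsEZ n]
  have hdsum : ∀ N : ℕ, ∑ n ∈ Finset.range (N + 1), (d n : ℝ) = (E6 (j + 1) q N : ℝ) := by
    intro N
    rw [← sum_E6 j q N]
    push_cast
    exact Finset.sum_congr rfl fun n _ => by rw [hdEZ n]
  have ts' : Tendsto (fun N : ℕ => (∑ n ∈ Finset.range (N + 1), (s n : ℝ)) / (N : ℝ) ^ (j + 1))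
      atTop (𝓝 (p1 / ((j + 1).factorial : ℝ))) :=
    (tendsto_E6 (j + 1) p).congr fun N => by rw [hssum N]
  have td' : Tendsto (fun N : ℕ => (∑ n ∈ Finset.range (N + 1), (d n : ℝ)) / (N : ℝ) ^ (j + 1))
      atTop (𝓝 (q1 / ((j + 1).factorial : ℝ))) :=
    (tendsto_E6 (j + 1) q).congr fun N => by rw [hdsum N]
  have hBne' : q1 / ((j + 1).factorial : ℝ) ≠ 0 := div_ne_zero hq1ne hfac'.ne'
  have hval2 : (p1 / ((j + 1).factorial : ℝ)) / (q1 / ((j + 1).factorial : ℝ)) = p1 / q1 := by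
    field_simp
  have part2 : Tendsto (fun N : ℕ =>
      (∑ n ∈ Finset.range (N + 1), (s n : ℝ)) / (∑ n ∈ Finset.range (N + 1), (d n : ℝ)))
      atTop (𝓝 (p1 / q1)) := by
    have := ratio_tendsto6 hBne' ts' td'
    rwa [hval2] at this
  exact ⟨part1, part2, part3⟩
end

section
/- Let (b_n)_{n≥1} be a sequence of nonnegative real numbers such that the power series Σ_{n≥1} b_n zⁿ has positive radius of convergence, let C > 0 and D > 0 be real constants, and let N′ ≥ 0 be an integer. Define a sequence (m_r)_{r≥0} by m_r = D for 0 ≤ r ≤ N′ and m_r = C·Σ_{s=1}^{r} b_s·m_{r−s} for r > N′. Then the power series Σ_{r≥0} m_r z^r has positive radius of convergence. -/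
/-- If `(bₙ)_{n≥1}` are nonnegative reals whose power series has positive
radius of convergence, `C, D > 0`, `N′ ≥ 0`, and `(m_r)` satisfies `m_r = D` for `r ≤ N′`
and `m_r = C·∑_{s=1}^r b_s m_{r−s}` for `r > N′`, then `∑ m_r z^r` has positive radius of
convergence. -/
theorem statement10 (b : ℕ → ℝ) (hb : ∀ n, 1 ≤ n → 0 ≤ b n)
    (hconv : ∃ x : ℝ, 0 < x ∧ Summable fun n : ℕ => b n * x ^ n)
    (C D : ℝ) (hC : 0 < C) (hD : 0 < D) (N' : ℕ) (m : ℕ → ℝ)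
    (hm1 : ∀ r : ℕ, r ≤ N' → m r = D)
    (hm2 : ∀ r : ℕ, N' < r → m r = C * ∑ s ∈ Finset.Icc 1 r, b s * m (r - s)) :
    ∃ x : ℝ, 0 < x ∧ Summable fun r : ℕ => m r * x ^ r := by
  obtain ⟨x, hx, hsum⟩ := hconv
  set b' : ℕ → ℝ := Set.indicator {s : ℕ | 1 ≤ s} (fun s => b s * x ^ s) with hb'def
  have hb'nn : ∀ s, 0 ≤ b' s := by
    intro s
    rw [hb'def]
    by_cases hs : s ∈ {s : ℕ | 1 ≤ s}
    · rw [Set.indicator_of_mem hs]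
      exact mul_nonneg (hb s hs) (pow_nonneg hx.le s)
    · rw [Set.indicator_of_notMem hs]
  have hb'eq : ∀ s, 1 ≤ s → b' s = b s * x ^ s := by
    intro s hs
    exact Set.indicator_of_mem hs _
  have hb'sum : Summable b' := hsum.indicator _
  set T : ℝ := ∑' s, b' s with hT
  have hT0 : 0 ≤ T := tsum_nonneg hb'nn
  set t : ℝ := min 1 (x / (C * T + 1)) with ht
  have hCT1 : 0 < C * T + 1 := by positivity
  have ht0 : 0 < t := lt_min one_pos (div_pos hx hCT1)
  have ht1 : t ≤ 1 := min_le_left _ _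
  have htx : t ≤ x := le_trans (min_le_right _ _) (by
    rw [div_le_iff₀ hCT1]
    nlinarith [mul_nonneg (mul_nonneg hC.le hT0) hx.le])
  -- key bound: C * ∑_{s=1}^r b s t^s ≤ 1
  have key : ∀ r : ℕ, C * ∑ s ∈ Finset.Icc 1 r, b s * t ^ s ≤ 1 := by
    intro r
    have h1 : ∀ s ∈ Finset.Icc 1 r, b s * t ^ s ≤ b' s * (t / x) := by
      intro s hs
      obtain ⟨hs1, _⟩ := Finset.mem_Icc.mp hs
      rw [hb'eq s hs1]
      have htx' : t / x ≤ 1 := (div_le_one hx).mpr htx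
      have htx0 : 0 ≤ t / x := div_nonneg ht0.le hx.le
      have hpow : t ^ s = x ^ s * (t / x) ^ s := by
        rw [div_pow]
        field_simp
      rw [hpow, ← mul_assoc]
      have : (t / x) ^ s ≤ t / x := by
        calc (t / x) ^ s ≤ (t / x) ^ 1 := pow_le_pow_of_le_one htx0 htx' hs1
        _ = t / x := pow_one _
      exact mul_le_mul_of_nonneg_left this
        (mul_nonneg (hb s hs1) (pow_nonneg hx.le s))
    have h2 : ∑ s ∈ Finset.Icc 1 r, b s * t ^ s ≤ (∑ s ∈ Finset.Icc 1 r, b' s) * (t / x) := by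
      rw [Finset.sum_mul]
      exact Finset.sum_le_sum h1
    have h3 : ∑ s ∈ Finset.Icc 1 r, b' s ≤ T :=
      Summable.sum_le_tsum _ (fun s _ => hb'nn s) hb'sum
    have h4 : ∑ s ∈ Finset.Icc 1 r, b s * t ^ s ≤ T * (t / x) := by
      calc ∑ s ∈ Finset.Icc 1 r, b s * t ^ s ≤ (∑ s ∈ Finset.Icc 1 r, b' s) * (t / x) := h2
      _ ≤ T * (t / x) := mul_le_mul_of_nonneg_right h3 (div_nonneg ht0.le hx.le)
    have h5 : C * T * t ≤ x := by
      have : t ≤ x / (C * T + 1) := min_le_right _ _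
      rw [le_div_iff₀ hCT1] at this
      nlinarith
    calc C * ∑ s ∈ Finset.Icc 1 r, b s * t ^ s ≤ C * (T * (t / x)) :=
          mul_le_mul_of_nonneg_left h4 hC.le
    _ ≤ 1 := by
        rw [div_eq_mul_inv]
        rw [mul_comm T (t * x⁻¹), ← mul_assoc, ← mul_assoc]
        have hx' : 0 < x⁻¹ := inv_pos.mpr hx
        calc C * t * x⁻¹ * T = C * T * t * x⁻¹ := by ring
        _ ≤ x * x⁻¹ := mul_le_mul_of_nonneg_right h5 hx'.le
        _ = 1 := mul_inv_cancel₀ hx.ne'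
  -- main inductive bound
  have main : ∀ r : ℕ, 0 ≤ m r ∧ m r * t ^ r ≤ D := by
    intro r
    induction r using Nat.strong_induction_on with
    | _ r ih =>
      by_cases hr : r ≤ N'
      · rw [hm1 r hr]
        refine ⟨hD.le, ?_⟩
        have : t ^ r ≤ 1 := pow_le_one₀ ht0.le ht1
        nlinarith
      · push_neg at hr
        rw [hm2 r hr]
        have hterm : ∀ s ∈ Finset.Icc 1 r, 0 ≤ b s * m (r - s) := by
          intro s hs
          obtain ⟨hs1, hsr⟩ := Finset.mem_Icc.mp hs
          have hlt : r - s < r := Nat.sub_lt (lt_of_le_of_lt (Nat.zero_le _) hr) hs1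
          exact mul_nonneg (hb s hs1) (ih _ hlt).1
        constructor
        · exact mul_nonneg hC.le (Finset.sum_nonneg hterm)
        · have hrw : (C * ∑ s ∈ Finset.Icc 1 r, b s * m (r - s)) * t ^ r
              = C * ∑ s ∈ Finset.Icc 1 r, (b s * t ^ s) * (m (r - s) * t ^ (r - s)) := by
            rw [mul_assoc, Finset.sum_mul]
            congr 1
            apply Finset.sum_congr rfl
            intro s hs
            obtain ⟨hs1, hsr⟩ := Finset.mem_Icc.mp hs
            have : t ^ r = t ^ s * t ^ (r - s) := by
              rw [← pow_add, Nat.add_sub_cancel' hsr]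
            rw [this]; ring
          rw [hrw]
          have hbound : ∑ s ∈ Finset.Icc 1 r, (b s * t ^ s) * (m (r - s) * t ^ (r - s))
              ≤ ∑ s ∈ Finset.Icc 1 r, (b s * t ^ s) * D := by
            apply Finset.sum_le_sum
            intro s hs
            obtain ⟨hs1, hsr⟩ := Finset.mem_Icc.mp hs
            have hlt : r - s < r := Nat.sub_lt (lt_of_le_of_lt (Nat.zero_le _) hr) hs1
            exact mul_le_mul_of_nonneg_left (ih _ hlt).2
              (mul_nonneg (hb s hs1) (pow_nonneg ht0.le s))
          calc C * ∑ s ∈ Finset.Icc 1 r, (b s * t ^ s) * (m (r - s) * t ^ (r - s))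
              ≤ C * ∑ s ∈ Finset.Icc 1 r, (b s * t ^ s) * D :=
                mul_le_mul_of_nonneg_left hbound hC.le
          _ = (C * ∑ s ∈ Finset.Icc 1 r, b s * t ^ s) * D := by
                rw [← Finset.sum_mul]; ring
          _ ≤ 1 * D := mul_le_mul_of_nonneg_right (key r) hD.le
          _ = D := one_mul D
  -- conclude with geometric comparison at t/2
  refine ⟨t / 2, by positivity, ?_⟩
  have hgeo : Summable fun r : ℕ => D * (1 / 2 : ℝ) ^ r :=
    (summable_geometric_of_lt_one (by norm_num) (by norm_num)).mul_left D
  apply Summable.of_nonneg_of_le _ _ hgeo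
  · intro r
    exact mul_nonneg (main r).1 (pow_nonneg (by positivity) r)
  · intro r
    have : (t / 2 : ℝ) ^ r = t ^ r * (1 / 2) ^ r := by
      rw [← mul_pow]; ring_nf
    rw [this, ← mul_assoc]
    exact mul_le_mul_of_nonneg_right (main r).2 (pow_nonneg (by norm_num) r)
end

section
/- Let α₁, …, α_m be nonzero real linear functionals on ℝˡ. Then there exists ε > 0 such that for all real numbers κ₁, …, κ_m with 0 ≤ κ_j < ε for each j, the function x ↦ ∏_{j=1}^m |α_j(x)|^{−κ_j}, defined on the complement of the union of the hyperplanes ker α_j (a set of full Lebesgue measure), is locally integrable on ℝˡ with respect to Lebesgue measure. -/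
open MeasureTheory Set
open scoped ENNReal

lemma aux_oneDim {s : ℝ} (hs1 : s < 1) :
    ∫⁻ u in Icc (-1:ℝ) 1, ENNReal.ofReal (|u| ^ (-s)) < ⊤ := by
  have hexp : (-1 : ℝ) < -s := by linarith
  have h01 : IntegrableOn (fun u : ℝ => |u| ^ (-s)) (Ioc 0 1) := by
    have h := intervalIntegral.intervalIntegrable_rpow' (a := 0) (b := 1) hexp
    rw [intervalIntegrable_iff_integrableOn_Ioc_of_le (by norm_num)] at h
    exact h.congr_fun (fun x hx => by rw [abs_of_pos hx.1]) measurableSet_Ioc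
  have hII : IntervalIntegrable (fun u : ℝ => |u| ^ (-s)) volume 0 1 := by
    rw [intervalIntegrable_iff_integrableOn_Ioc_of_le (by norm_num)]
    exact h01
  have hneg : IntegrableOn (fun u : ℝ => |u| ^ (-s)) (Ioc (-1) 0) := by
    have h := (IntervalIntegrable.iff_comp_neg (f := fun u : ℝ => |u| ^ (-s)) (a := 0) (b := 1) enorm_ne_top).mp hII
    simp only [abs_neg, neg_zero, neg_neg] at h
    exact h.2
  have hIcc : IntegrableOn (fun u : ℝ => |u| ^ (-s)) (Icc (-1) 1) := by
    rw [integrableOn_Icc_iff_integrableOn_Ioc]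
    rw [← Set.Ioc_union_Ioc_eq_Ioc (by norm_num : (-1:ℝ) ≤ 0) (by norm_num : (0:ℝ) ≤ 1)]
    exact hneg.union h01
  exact hIcc.lintegral_lt_top

lemma aux_affine {s : ℝ} (hs0 : 0 ≤ s) {a : ℝ} (ha : a ≠ 0) (R c : ℝ) :
    ∫⁻ t in Icc (-R) R, ENNReal.ofReal (|a * t + c| ^ (-s)) ≤
      ENNReal.ofReal |a⁻¹| *
        ((∫⁻ u in Icc (-1:ℝ) 1, ENNReal.ofReal (|u| ^ (-s))) + ENNReal.ofReal (2 * (|a| * R))) := by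
  set I : Set ℝ := Icc (c - |a| * R) (c + |a| * R) with hI
  have hmeas0 : Measurable fun u : ℝ => ENNReal.ofReal (|u| ^ (-s)) :=
    ENNReal.measurable_ofReal.comp ((measurable_id.abs).pow_const (-s))
  set g : ℝ → ℝ≥0∞ := I.indicator (fun u => ENNReal.ofReal (|u| ^ (-s))) with hg
  have hgmeas : Measurable g := hmeas0.indicator measurableSet_Icc
  have step1 : ∫⁻ t in Icc (-R) R, ENNReal.ofReal (|a * t + c| ^ (-s)) ≤
      ∫⁻ t, g (a * t + c) := by
    rw [← lintegral_indicator measurableSet_Icc]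
    refine lintegral_mono fun t => ?_
    by_cases ht : t ∈ Icc (-R) R
    · rw [indicator_of_mem ht]
      have hmem : a * t + c ∈ I := by
        have h1 : |a * t| ≤ |a| * R := by
          rw [abs_mul]
          have := abs_le.mpr ⟨ht.1, ht.2⟩
          exact mul_le_mul_of_nonneg_left (by linarith [abs_le.mpr ⟨ht.1, ht.2⟩]) (abs_nonneg a)
        have h2 := abs_le.mp h1
        exact ⟨by linarith [h2.1], by linarith [h2.2]⟩
      rw [hg, indicator_of_mem hmem]
    · rw [indicator_of_notMem ht]; exact zero_le
  have step2 : ∫⁻ t, g (a * t + c) = ENNReal.ofReal |a⁻¹| * ∫⁻ u, g u := by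
    have h1 : ∫⁻ t, g (a * t + c) = ∫⁻ t, (fun u => g (u + c)) (a * t) := by simp
    have hgc : Measurable fun u : ℝ => g (u + c) := hgmeas.comp (measurable_add_const c)
    rw [h1, ← lintegral_map hgc (measurable_const_mul a),
      Real.map_volume_mul_left ha, lintegral_smul_measure]
    congr 1
    exact lintegral_add_right_eq_self (fun u => g u) c
  have step3 : ∫⁻ u, g u ≤
      (∫⁻ u in Icc (-1:ℝ) 1, ENNReal.ofReal (|u| ^ (-s))) + ENNReal.ofReal (2 * (|a| * R)) := by
    have hb : ∀ u, g u ≤ (Icc (-1:ℝ) 1).indicator (fun u => ENNReal.ofReal (|u| ^ (-s))) u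
        + I.indicator (fun _ => 1) u := by
      intro u
      by_cases hu : u ∈ I
      · rw [hg, indicator_of_mem hu, indicator_of_mem hu]
        by_cases h1 : |u| ≤ 1
        · rw [indicator_of_mem (Set.mem_Icc.mpr (abs_le.mp h1))]
          exact le_add_right le_rfl
        · have : |u| ^ (-s) ≤ 1 :=
            Real.rpow_le_one_of_one_le_of_nonpos (le_of_not_ge h1) (by linarith)
          calc ENNReal.ofReal (|u| ^ (-s)) ≤ 1 := by
                simpa using ENNReal.ofReal_le_ofReal this
            _ ≤ _ := le_add_left le_rfl
      · rw [hg, indicator_of_notMem hu, indicator_of_notMem hu]; simp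
    calc ∫⁻ u, g u ≤ ∫⁻ u, ((Icc (-1:ℝ) 1).indicator (fun u => ENNReal.ofReal (|u| ^ (-s))) u
          + I.indicator (fun _ => 1) u) := lintegral_mono hb
      _ = (∫⁻ u in Icc (-1:ℝ) 1, ENNReal.ofReal (|u| ^ (-s))) + ENNReal.ofReal (2 * (|a| * R)) := by
          rw [lintegral_add_left (hmeas0.indicator measurableSet_Icc),
            lintegral_indicator measurableSet_Icc, lintegral_indicator measurableSet_Icc]
          congr 1
          simp only [lintegral_const, Measure.restrict_apply MeasurableSet.univ, univ_inter,
            one_mul]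
          rw [Real.volume_Icc]
          congr 1
          ring
  calc ∫⁻ t in Icc (-R) R, ENNReal.ofReal (|a * t + c| ^ (-s)) ≤ ∫⁻ t, g (a * t + c) := step1
    _ = ENNReal.ofReal |a⁻¹| * ∫⁻ u, g u := step2
    _ ≤ _ := mul_le_mul_right step3 _

lemma aux_single {n : ℕ} (β : ((Fin (n+1) → ℝ)) →ₗ[ℝ] ℝ) (hβ : β ≠ 0)
    {s : ℝ} (hs0 : 0 ≤ s) (hs1 : s < 1) (R : ℝ) :
    ∫⁻ x in univ.pi (fun _ : Fin (n+1) => Icc (-R) R), ENNReal.ofReal (|β x| ^ (-s)) < ⊤ := by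
  -- find a coordinate where β is nonzero
  have hex : ∃ k : Fin (n+1), β (Pi.single k 1) ≠ 0 := by
    by_contra h
    push_neg at h
    apply hβ
    refine LinearMap.ext fun x => ?_
    rw [LinearMap.pi_apply_eq_sum_univ]
    simp only [LinearMap.zero_apply]
    refine Finset.sum_eq_zero fun i _ => ?_
    have : (fun j => if i = j then (1:ℝ) else 0) = Pi.single i 1 := by
      funext j; simp [Pi.single_apply, eq_comm]
    rw [this, h i, smul_zero]
  obtain ⟨k, ha⟩ := hex
  set a : ℝ := β (Pi.single k 1) with haDef
  -- decompose along coordinate k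
  set box : Set (Fin (n+1) → ℝ) := univ.pi (fun _ => Icc (-R) R) with hbox
  set boxn : Set (Fin n → ℝ) := univ.pi (fun _ => Icc (-R) R) with hboxn
  have hboxmeas : MeasurableSet box := MeasurableSet.univ_pi fun _ => measurableSet_Icc
  have hβcont : Continuous β := LinearMap.continuous_on_pi β
  set F : (Fin (n+1) → ℝ) → ℝ≥0∞ :=
    box.indicator (fun x => ENNReal.ofReal (|β x| ^ (-s))) with hF
  have hFmeas : Measurable F :=
    (ENNReal.measurable_ofReal.comp
      ((hβcont.measurable.abs).pow_const (-s))).indicator hboxmeas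
  have hins : ∀ (t : ℝ) (y : Fin n → ℝ),
      β (k.insertNth t y) = a * t + β (k.insertNth 0 y) := by
    intro t y
    have h1 : k.insertNth t y
        = k.insertNth (0:ℝ) y + t • (Pi.single k (1:ℝ) : Fin (n+1) → ℝ) := by
      funext i
      refine Fin.succAboveCases k ?_ ?_ i
      · simp [Fin.insertNth_apply_same]
      · intro j
        simp [Fin.insertNth_apply_succAbove, Pi.single_eq_of_ne (Fin.succAbove_ne k j)]
    rw [h1, map_add, β.map_smul, smul_eq_mul, ← haDef]
    ring
  have hmem : ∀ (t : ℝ) (y : Fin n → ℝ),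
      k.insertNth t y ∈ box ↔ t ∈ Icc (-R) R ∧ y ∈ boxn := by
    intro t y
    simp only [hbox, hboxn, mem_pi, mem_univ, forall_true_left]
    rw [Fin.forall_iff_succAbove k]
    simp [Fin.insertNth_apply_same, Fin.insertNth_apply_succAbove]
  -- the constant from aux_affine
  set C : ℝ≥0∞ := ENNReal.ofReal |a⁻¹| *
    ((∫⁻ u in Icc (-1:ℝ) 1, ENNReal.ofReal (|u| ^ (-s))) + ENNReal.ofReal (2 * (|a| * R)))
    with hC
  have hCfin : C < ⊤ := by
    rw [hC]
    refine ENNReal.mul_lt_top ENNReal.ofReal_lt_top ?_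
    exact ENNReal.add_lt_top.mpr ⟨aux_oneDim hs1, ENNReal.ofReal_lt_top⟩
  -- rewrite the integral via the measurable equiv
  have e := MeasurableEquiv.piFinSuccAbove (fun _ : Fin (n+1) => ℝ) k
  have hmp := (volume_preserving_piFinSuccAbove (fun _ : Fin (n+1) => ℝ) k).symm
  have key : ∫⁻ x in box, ENNReal.ofReal (|β x| ^ (-s)) =
      ∫⁻ p : ℝ × (Fin n → ℝ), F (k.insertNth p.1 p.2) := by
    rw [← lintegral_indicator hboxmeas, ← hF, ← hmp.lintegral_comp hFmeas]
    congr 1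
  rw [key]
  have hFcomp : Measurable fun p : ℝ × (Fin n → ℝ) => F (k.insertNth p.1 p.2) := by
    have : Measurable fun p : ℝ × (Fin n → ℝ) => (MeasurableEquiv.piFinSuccAbove
        (fun _ : Fin (n+1) => ℝ) k).symm p := (MeasurableEquiv.piFinSuccAbove _ k).symm.measurable
    exact hFmeas.comp this
  rw [show (volume : Measure (ℝ × (Fin n → ℝ))) = (volume : Measure ℝ).prod volume from rfl,
    lintegral_prod_symm _ hFcomp.aemeasurable]
  have inner : ∀ y : Fin n → ℝ,
      (∫⁻ t : ℝ, F (k.insertNth t y)) ≤ boxn.indicator (fun _ => C) y := by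
    intro y
    by_cases hy : y ∈ boxn
    · rw [indicator_of_mem hy]
      have hFeq : ∀ t : ℝ, F (k.insertNth t y) =
          (Icc (-R) R).indicator
            (fun t => ENNReal.ofReal (|a * t + β (k.insertNth 0 y)| ^ (-s))) t := by
        intro t
        by_cases ht : t ∈ Icc (-R) R
        · rw [hF, indicator_of_mem ((hmem t y).mpr ⟨ht, hy⟩), indicator_of_mem ht, hins]
        · rw [hF, indicator_of_notMem (fun hmem' => ht ((hmem t y).mp hmem').1),
            indicator_of_notMem ht]
      simp_rw [hFeq]
      rw [lintegral_indicator measurableSet_Icc]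
      exact aux_affine hs0 ha R _
    · rw [indicator_of_notMem hy]
      have : ∀ t : ℝ, F (k.insertNth t y) = 0 := fun t => by
        rw [hF, indicator_of_notMem (fun hmem' => hy ((hmem t y).mp hmem').2)]
      simp [this]
  calc ∫⁻ y, ∫⁻ t, F (k.insertNth t y) ≤ ∫⁻ y, boxn.indicator (fun _ => C) y :=
        lintegral_mono inner
    _ = C * volume boxn := by
        rw [lintegral_indicator (MeasurableSet.univ_pi fun _ => measurableSet_Icc),
          setLIntegral_const]
    _ < ⊤ := by
        refine ENNReal.mul_lt_top hCfin ?_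
        rw [hboxn, volume_pi_pi]
        exact ENNReal.prod_lt_top fun i _ => by rw [Real.volume_Icc]; exact ENNReal.ofReal_lt_top

/-- Given nonzero linear functionals `α₁, …, α_m` on `ℝˡ`, there is
`ε > 0` such that for all exponents `0 ≤ κⱼ < ε` the function
`x ↦ ∏ⱼ |αⱼ(x)|^{−κⱼ}` is locally integrable on `ℝˡ` for Lebesgue measure. -/
theorem statement11 (l m : ℕ) (α : Fin m → ((Fin l → ℝ) →ₗ[ℝ] ℝ))
    (hα : ∀ j, α j ≠ 0) :
    ∃ ε : ℝ, 0 < ε ∧ ∀ κ : Fin m → ℝ, (∀ j, 0 ≤ κ j) → (∀ j, κ j < ε) →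
      LocallyIntegrable (fun x : Fin l → ℝ => ∏ j, |α j x| ^ (-(κ j)))
        (volume : Measure (Fin l → ℝ)) := by
  rcases Nat.eq_zero_or_pos m with hm | hm
  · subst hm
    refine ⟨1, one_pos, fun κ _ _ => ?_⟩
    simpa using (locallyIntegrable_const (1 : ℝ))
  obtain ⟨m', rfl⟩ : ∃ m', m = m' + 1 := ⟨m - 1, (Nat.succ_pred_eq_of_pos hm).symm⟩
  obtain ⟨n, rfl⟩ : ∃ n, l = n + 1 := by
    rcases Nat.eq_zero_or_pos l with hl | hl
    · exfalso
      apply hα 0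
      subst hl
      exact Subsingleton.elim _ _
    · exact ⟨l - 1, (Nat.succ_pred_eq_of_pos hl).symm⟩
  refine ⟨(2 * (m' + 1 : ℕ) : ℝ)⁻¹, by positivity, fun κ hκ0 hκε => ?_⟩
  have hmR : (0:ℝ) < ((m' + 1 : ℕ) : ℝ) := by positivity
  have hmne : ((m' + 1 : ℕ) : ℝ) ≠ 0 := ne_of_gt hmR
  -- measurability of the integrand
  have hmeasf : Measurable fun x : Fin (n+1) → ℝ => ∏ j, |α j x| ^ (-(κ j)) := by
    refine Finset.measurable_prod _ fun j _ => ?_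
    exact ((LinearMap.continuous_on_pi (α j)).measurable.abs).pow_const _
  rw [locallyIntegrable_iff]
  intro K hK
  -- bound K inside a box
  obtain ⟨r, hr⟩ := hK.isBounded.subset_closedBall 0
  set R : ℝ := max r 1 with hR
  set box : Set (Fin (n+1) → ℝ) := univ.pi (fun _ => Icc (-R) R) with hbox
  have hsub : K ⊆ box := by
    intro x hx
    have h1 : ‖x‖ ≤ r := by simpa [Metric.mem_closedBall] using hr hx
    intro i _
    have h2 : ‖x i‖ ≤ ‖x‖ := norm_le_pi_norm x i
    have h3 : |x i| ≤ R := le_trans (le_trans h2 h1) (le_max_left r 1)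
    exact abs_le.mp h3
  refine IntegrableOn.mono_set ?_ hsub
  -- Integrability on the box
  constructor
  · exact hmeasf.aestronglyMeasurable
  · rw [hasFiniteIntegral_iff_ofReal (ae_of_all _ fun x =>
      Finset.prod_nonneg fun j _ => Real.rpow_nonneg (abs_nonneg _) _)]
    -- rewrite as a product of ENNReal powers
    have hrw : ∀ x : Fin (n+1) → ℝ,
        ENNReal.ofReal (∏ j, |α j x| ^ (-(κ j))) =
          ∏ j, (ENNReal.ofReal (|α j x| ^ (-(((m' + 1 : ℕ):ℝ) * κ j)))) ^ (((m' + 1 : ℕ):ℝ)⁻¹) := by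
      intro x
      rw [ENNReal.ofReal_prod_of_nonneg fun j _ => Real.rpow_nonneg (abs_nonneg _) _]
      refine Finset.prod_congr rfl fun j _ => ?_
      have hre : |α j x| ^ (-κ j)
          = (|α j x| ^ (-(((m' + 1 : ℕ):ℝ) * κ j))) ^ (((m' + 1 : ℕ):ℝ))⁻¹ := by
        rw [← Real.rpow_mul (abs_nonneg _)]
        congr 1
        field_simp
      rw [hre, ENNReal.ofReal_rpow_of_nonneg (Real.rpow_nonneg (abs_nonneg _) _)
        (by positivity)]
    simp_rw [hrw]
    -- Hölder inequality
    have hHolder := ENNReal.lintegral_prod_norm_pow_le (μ := volume.restrict box)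
      Finset.univ
      (f := fun j a => ENNReal.ofReal (|α j a| ^ (-(((m' + 1 : ℕ):ℝ) * κ j))))
      (fun j _ => (ENNReal.measurable_ofReal.comp
        (((LinearMap.continuous_on_pi (α j)).measurable.abs).pow_const _)).aemeasurable)
      (p := fun _ => ((m' + 1 : ℕ):ℝ)⁻¹)
      (by
        rw [Finset.sum_const, Finset.card_univ, Fintype.card_fin, nsmul_eq_mul]
        exact mul_inv_cancel₀ hmne)
      (fun j _ => by positivity)
    refine lt_of_le_of_lt hHolder ?_
    refine ENNReal.prod_lt_top fun j _ => ?_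
    refine ENNReal.rpow_lt_top_of_nonneg (by positivity) ?_
    have hκj := hκ0 j
    have hs0 : 0 ≤ ((m' + 1 : ℕ):ℝ) * κ j := by positivity
    have hs1 : ((m' + 1 : ℕ):ℝ) * κ j < 1 := by
      have h1 := hκε j
      have h3 : ((m' + 1 : ℕ):ℝ) * κ j
          < ((m' + 1 : ℕ):ℝ) * (2 * ((m' + 1 : ℕ):ℝ))⁻¹ :=
        mul_lt_mul_of_pos_left (by exact_mod_cast h1) hmR
      have h2 : ((m' + 1 : ℕ):ℝ) * (2 * ((m' + 1 : ℕ):ℝ))⁻¹ = 1/2 := by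
        field_simp
      rw [h2] at h3
      linarith
    exact (aux_single (α j) (hα j) hs0 hs1 R).ne
end

section
/- Let α₁, …, α_m be nonzero real linear functionals on ℝˡ, let δ(x) = ∏_{j=1}^m α_j(x), let Ω = {x ∈ ℝˡ : δ(x) ≠ 0}, and let E be a normed vector space. Suppose K : Ω → E is continuous, positively homogeneous in norm of some degree d ∈ ℝ, meaning ‖K(t x)‖ = t^d·‖K(x)‖ for all real t > 0 and x ∈ Ω, and satisfies ‖K(x)‖ ≤ M·∏_{j=1}^m |α_j(x)|^{−κ_j} for all x ∈ Ω with ‖x‖ = 1, for some constants M > 0 and κ₁, …, κ_m ≥ 0. Then there exists an integer N ≥ 0 such that the function equal to δ(x)^N·K(x) for x ∈ Ω and equal to 0 for x ∈ ℝˡ∖Ω is continuous on all of ℝˡ. -/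
open Filter Topology Set


/-- Let `α₁, …, α_m` be nonzero linear functionals on `ℝˡ`, let
`δ(x) = ∏ⱼ αⱼ(x)` and `Ω = {x : δ(x) ≠ 0}`.  If `K : Ω → E` is continuous, positively
homogeneous in norm of degree `d`, and bounded on the unit sphere inside `Ω` by
`M·∏ⱼ |αⱼ(x)|^{−κⱼ}` with `M > 0` and `κⱼ ≥ 0`, then for some `N ≥ 0` the function equal
to `δ(x)^N • K(x)` on `Ω` and to `0` off `Ω` is continuous on all of `ℝˡ`. -/
theorem statement12 (l m : ℕ) {E : Type*} [NormedAddCommGroup E] [NormedSpace ℝ E]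
    (α : Fin m → ((Fin l → ℝ) →ₗ[ℝ] ℝ)) (hα : ∀ j, α j ≠ 0)
    (K : (Fin l → ℝ) → E) (d : ℝ)
    (hcont : ContinuousOn K {x : Fin l → ℝ | (∏ j, α j x) ≠ 0})
    (hhom : ∀ t : ℝ, 0 < t → ∀ x : Fin l → ℝ, (∏ j, α j x) ≠ 0 →
      ‖K (t • x)‖ = t ^ d * ‖K x‖)
    (M : ℝ) (hM : 0 < M) (κ : Fin m → ℝ) (hκ : ∀ j, 0 ≤ κ j)
    (hbound : ∀ x : Fin l → ℝ, (∏ j, α j x) ≠ 0 → ‖x‖ = 1 →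
      ‖K x‖ ≤ M * ∏ j, |α j x| ^ (-(κ j))) :
    ∃ N : ℕ, Continuous
      (Set.indicator {x : Fin l → ℝ | (∏ j, α j x) ≠ 0}
        (fun x => (∏ j, α j x) ^ N • K x)) := by
  classical
  have hαc : ∀ j, Continuous (α j) := fun j => (α j).continuous_of_finiteDimensional
  have hδc : Continuous (fun x : Fin l → ℝ => ∏ j, α j x) :=
    continuous_finset_prod _ fun j _ => (hαc j)
  set Ω : Set (Fin l → ℝ) := {x | (∏ j, α j x) ≠ 0} with hΩdef
  have hΩopen : IsOpen Ω := isOpen_compl_singleton.preimage hδc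
  rcases Nat.eq_zero_or_pos m with hm | hm
  · -- m = 0 : the product is 1, Ω = univ
    subst hm
    refine ⟨0, ?_⟩
    have hΩu : Ω = univ := by
      ext x; simp [hΩdef]
    rw [hΩu] at hcont ⊢
    rw [Set.indicator_univ]
    have hK : Continuous K := continuousOn_univ.1 hcont
    simpa using hK
  · -- main case m ≥ 1
    set S : ℝ := ∑ j, κ j with hSdef
    have hS : 0 ≤ S := Finset.sum_nonneg fun j _ => hκ j
    obtain ⟨N, hN⟩ := exists_nat_gt (S + |d|)
    refine ⟨N, ?_⟩
    set p : Fin m → ℝ := fun j => (N : ℝ) - κ j with hpdef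
    have hp : ∀ j, 0 < p j := by
      intro j
      have h1 : κ j ≤ S := Finset.single_le_sum (fun i _ => hκ i) (Finset.mem_univ j)
      have : κ j < (N : ℝ) := lt_of_le_of_lt (h1.trans (le_add_of_nonneg_right (abs_nonneg d))) hN
      simpa [hpdef] using sub_pos.2 this
    have hNpos : (1:ℝ) ≤ (N:ℝ) := by
      have : (0:ℝ) < N := lt_of_le_of_lt (by positivity) hN
      exact_mod_cast Nat.one_le_iff_ne_zero.2 (by exact_mod_cast this.ne')
    have hdm : 0 < d + (m : ℝ) * N := by
      have h1 : (N : ℝ) ≤ (m : ℝ) * N := le_mul_of_one_le_left (by positivity) (by exact_mod_cast hm)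
      have h2 : d + S + |d| < d + (N : ℝ) := by linarith
      have h3 : 0 ≤ d + S + |d| := by
        have := neg_abs_le d; linarith
      linarith
    -- continuous linear map versions and operator norms
    set αC : Fin m → ((Fin l → ℝ) →L[ℝ] ℝ) := fun j => LinearMap.toContinuousLinearMap (α j) with hαCdef
    have hαCval : ∀ j x, αC j x = α j x := fun j x => rfl
    set C : ℝ := ∏ j, ‖αC j‖ ^ p j with hCdef
    have hC : 0 ≤ C := Finset.prod_nonneg fun j _ => Real.rpow_nonneg (norm_nonneg _) _
    set f : (Fin l → ℝ) → E :=
      Set.indicator Ω (fun x => (∏ j, α j x) ^ N • K x) with hfdef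
    -- Key estimate on Ω
    have key : ∀ y ∈ Ω, ‖(∏ j, α j y) ^ N • K y‖ ≤ M * ‖y‖ ^ (d + S) * ∏ j, |α j y| ^ p j := by
      intro y hy
      have hprod : (∏ j, α j y) ≠ 0 := hy
      have hαy : ∀ j, α j y ≠ 0 := fun j =>
        Finset.prod_ne_zero_iff.1 hprod j (Finset.mem_univ j)
      have hy0 : y ≠ 0 := by
        intro h
        exact hαy ⟨0, hm⟩ (by simp [h])
      have ht : 0 < ‖y‖ := norm_pos_iff.2 hy0
      set t : ℝ := ‖y‖ with htdef
      set u : Fin l → ℝ := t⁻¹ • y with hudef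
      have hu1 : ‖u‖ = 1 := by
        rw [hudef, norm_smul, norm_inv, Real.norm_eq_abs, abs_of_pos ht]
        field_simp
        exact htdef.symm
      have hαu : ∀ j, α j u = t⁻¹ * α j y := by
        intro j; simp [hudef, map_smul, smul_eq_mul]
      have huΩ : (∏ j, α j u) ≠ 0 := by
        rw [Finset.prod_ne_zero_iff]
        intro j _
        rw [hαu j]
        exact mul_ne_zero (inv_ne_zero ht.ne') (hαy j)
      have htu : t • u = y := by
        rw [hudef, smul_smul, mul_inv_cancel₀ ht.ne', one_smul]
      have hKy : ‖K y‖ = t ^ d * ‖K u‖ := by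
        rw [← htu]; exact hhom t ht u huΩ
      have hKu : ‖K u‖ ≤ M * ∏ j, |α j u| ^ (-(κ j)) := hbound u huΩ hu1
      have hprodu : (∏ j, |α j u| ^ (-(κ j))) = t ^ S * ∏ j, |α j y| ^ (-(κ j)) := by
        rw [hSdef, Real.rpow_sum_of_pos ht, ← Finset.prod_mul_distrib]
        refine Finset.prod_congr rfl fun j _ => ?_
        rw [hαu j, abs_mul, abs_inv, abs_of_pos ht,
          Real.mul_rpow (by positivity) (abs_nonneg _),
          Real.inv_rpow ht.le, Real.rpow_neg ht.le, inv_inv]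
      have hKy2 : ‖K y‖ ≤ M * t ^ (d + S) * ∏ j, |α j y| ^ (-(κ j)) := by
        rw [hKy, Real.rpow_add ht]
        calc t ^ d * ‖K u‖ ≤ t ^ d * (M * (t ^ S * ∏ j, |α j y| ^ (-(κ j)))) := by
              have := hKu
              rw [hprodu] at this
              exact mul_le_mul_of_nonneg_left this (Real.rpow_nonneg ht.le _)
          _ = M * (t ^ d * t ^ S) * ∏ j, |α j y| ^ (-(κ j)) := by ring
      have habs : ‖(∏ j, α j y) ^ N • K y‖ = (∏ j, |α j y| ^ (N : ℝ)) * ‖K y‖ := by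
        rw [norm_smul, Real.norm_eq_abs, abs_pow, Finset.abs_prod, ← Finset.prod_pow]
        congr 1
        exact Finset.prod_congr rfl fun j _ => (Real.rpow_natCast _ N).symm
      rw [habs]
      calc (∏ j, |α j y| ^ (N : ℝ)) * ‖K y‖
          ≤ (∏ j, |α j y| ^ (N : ℝ)) * (M * t ^ (d + S) * ∏ j, |α j y| ^ (-(κ j))) := by
            exact mul_le_mul_of_nonneg_left hKy2
              (Finset.prod_nonneg fun j _ => Real.rpow_nonneg (abs_nonneg _) _)
        _ = M * t ^ (d + S) *
            ((∏ j, |α j y| ^ (N : ℝ)) * ∏ j, |α j y| ^ (-(κ j))) := by ring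
        _ = M * ‖y‖ ^ (d + S) * ∏ j, |α j y| ^ p j := by
            congr 1
            rw [← Finset.prod_mul_distrib]
            refine Finset.prod_congr rfl fun j _ => ?_
            have h0 : (0:ℝ) < |α j y| := abs_pos.2 (hαy j)
            rw [← Real.rpow_add h0]
            congr 1
    -- bound near 0
    have key0 : ∀ y, ‖f y‖ ≤ M * C * ‖y‖ ^ (d + (m : ℝ) * N) := by
      intro y
      by_cases hy : y ∈ Ω
      · rw [hfdef, Set.indicator_of_mem hy]
        have hy0 : y ≠ 0 := by
          intro h
          exact (Finset.prod_ne_zero_iff.1 hy ⟨0, hm⟩ (Finset.mem_univ _)) (by simp [h])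
        have ht : 0 < ‖y‖ := norm_pos_iff.2 hy0
        refine (key y hy).trans ?_
        have hterm : ∀ j, |α j y| ^ p j ≤ (‖αC j‖ * ‖y‖) ^ p j := by
          intro j
          refine Real.rpow_le_rpow (abs_nonneg _) ?_ (hp j).le
          have := (αC j).le_opNorm y
          simpa [Real.norm_eq_abs, hαCval] using this
        calc M * ‖y‖ ^ (d + S) * ∏ j, |α j y| ^ p j
            ≤ M * ‖y‖ ^ (d + S) * ∏ j, (‖αC j‖ * ‖y‖) ^ p j := by
              refine mul_le_mul_of_nonneg_left ?_ (by positivity)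
              exact Finset.prod_le_prod (fun j _ => Real.rpow_nonneg (abs_nonneg _) _)
                (fun j _ => hterm j)
          _ = M * C * ‖y‖ ^ (d + (m : ℝ) * N) := by
              have hsplit : (∏ j, (‖αC j‖ * ‖y‖) ^ p j) = C * ‖y‖ ^ ((m:ℝ) * N - S) := by
                have h1 : (∏ j, (‖αC j‖ * ‖y‖) ^ p j) = ∏ j, (‖αC j‖ ^ p j * ‖y‖ ^ p j) :=
                  Finset.prod_congr rfl fun j _ =>
                    Real.mul_rpow (norm_nonneg _) (norm_nonneg _)
                rw [h1, Finset.prod_mul_distrib, hCdef]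
                congr 1
                rw [← Real.rpow_sum_of_pos ht]
                congr 1
                rw [hpdef]
                rw [Finset.sum_sub_distrib]
                simp [hSdef, mul_comm]
              rw [hsplit]
              have he : ‖y‖ ^ (d + (m:ℝ) * N) = ‖y‖ ^ (d + S) * ‖y‖ ^ ((m:ℝ) * N - S) := by
                rw [← Real.rpow_add ht]; ring_nf
              rw [he]; ring
      · rw [hfdef, Set.indicator_of_notMem hy]
        simp only [norm_zero]
        positivity
    -- now prove continuity at every point
    rw [continuous_iff_continuousAt]
    intro x₀
    by_cases hx₀ : x₀ ∈ Ω
    · -- interior of Ω : f agrees with a continuous function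
      have hmem : Ω ∈ 𝓝 x₀ := hΩopen.mem_nhds hx₀
      have hg : ContinuousAt (fun x => (∏ j, α j x) ^ N • K x) x₀ := by
        exact ContinuousAt.smul (hδc.continuousAt.pow N)
          (hcont.continuousAt hmem)
      refine hg.congr ?_
      filter_upwards [hmem] with y hy
      rw [hfdef]
      exact (Set.indicator_of_mem hy (fun x => (∏ j, α j x) ^ N • K x)).symm
    · -- boundary / complement : squeeze to zero
      have hfx₀ : f x₀ = 0 := Set.indicator_of_notMem hx₀ _
      rw [ContinuousAt, hfx₀]
      by_cases h0 : x₀ = 0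
      · subst h0
        refine squeeze_zero_norm key0 ?_
        have hca : ContinuousAt (fun y : Fin l → ℝ => M * C * ‖y‖ ^ (d + (m:ℝ) * N)) 0 := by
          refine (continuousAt_const.mul ?_)
          exact (Real.continuousAt_rpow_const _ _ (Or.inr hdm.le)).comp
            (continuous_norm.continuousAt)
        have : (fun y : Fin l → ℝ => M * C * ‖y‖ ^ (d + (m:ℝ) * N)) 0 = 0 := by
          simp [Real.zero_rpow hdm.ne']
        rw [← this]
        exact hca
      · -- x₀ ≠ 0, δ x₀ = 0
        have hδx₀ : (∏ j, α j x₀) = 0 := by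
          by_contra h; exact hx₀ h
        set g : (Fin l → ℝ) → ℝ := fun y => M * ‖y‖ ^ (d + S) * ∏ j, |α j y| ^ p j with hgdef
        have hbnd : ∀ y, ‖f y‖ ≤ g y := by
          intro y
          by_cases hy : y ∈ Ω
          · rw [hfdef, Set.indicator_of_mem hy]; exact key y hy
          · rw [hfdef, Set.indicator_of_notMem hy]
            simp only [norm_zero, hgdef]
            have : (0:ℝ) ≤ ∏ j, |α j y| ^ p j :=
              Finset.prod_nonneg fun j _ => Real.rpow_nonneg (abs_nonneg _) _
            positivity
        refine squeeze_zero_norm hbnd ?_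
        have hg0 : g x₀ = 0 := by
          obtain ⟨j, _, hj⟩ := Finset.prod_eq_zero_iff.1 hδx₀
          have : (∏ j, |α j x₀| ^ p j) = 0 :=
            Finset.prod_eq_zero (Finset.mem_univ j)
              (by rw [hj, abs_zero, Real.zero_rpow (hp j).ne'])
          simp [hgdef, this]
        have hca : ContinuousAt g x₀ := by
          refine ContinuousAt.mul (ContinuousAt.mul continuousAt_const ?_) ?_
          · exact (Real.continuousAt_rpow_const _ _
              (Or.inl (norm_ne_zero_iff.2 h0))).comp continuous_norm.continuousAt
          · exact tendsto_finset_prod _ fun j _ =>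
              (Real.continuousAt_rpow_const _ _ (Or.inr (hp j).le)).comp
                ((hαc j).abs.continuousAt)
        rw [← hg0]
        exact hca
end
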